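/- arXiv:2012.04061 — 7 statements merged into one kernel-verified Lean document; each statement's English description precedes it below -/
import Mathlib

section
/- For a single client running the local-momentum (SPIDER-style) recursion with an L-smooth objective f_i, if η < 1/L and E < (1/4)·min(1/(ηL), 1/(η²L²) − 1/(ηL)), then Σ_{τ=0}^{E−1} E[‖v_{k,τ}^{(i)}‖²] ≤ 16E·‖∇f_i(w_k)‖², where the expectation is over the batches B_{k,1}^{(i)},…,B_{k,E−1}^{(i)}. -/
open MeasureTheory Finset

set_option maxHeartbeats 1000000 in
/-- Lemma "fl-lem-new1".
A single client with an `L`-smooth objective `f` runs the SPIDER-style local-momentum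
recursion in a round starting at `wk = w_k`; the batches `B_{k,1},…,B_{k,E−1}` are the
coordinates of the product probability space `Fin E → Bt`, the stochastic gradients
`G · b` are `L`-Lipschitz and unbiased.  If `η < 1/L` and
`E < (1/4)·min(1/(ηL), 1/(η²L²) − 1/(ηL))`, then
`Σ_{τ=0}^{E−1} E[‖v_{k,τ}‖²] ≤ 16E·‖∇f(w_k)‖²`. -/
theorem stmt7
    {d : ℕ} {Bt : Type*} [MeasurableSpace Bt]
    (μB : Measure Bt) [IsProbabilityMeasure μB]
    (E : ℕ) (hE : 1 ≤ E) (η L : ℝ) (hη : 0 < η) (hL : 0 < L)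
    (f : EuclideanSpace ℝ (Fin d) → ℝ)
    (hdiff : Differentiable ℝ f)
    (hsmooth : ∀ x y, ‖gradient f x - gradient f y‖ ≤ L * ‖x - y‖)
    (G : EuclideanSpace ℝ (Fin d) → Bt → EuclideanSpace ℝ (Fin d))
    (hGlip : ∀ b x y, ‖G x b - G y b‖ ≤ L * ‖x - y‖)
    (hGint : ∀ x, Integrable (G x) μB)
    (hGunb : ∀ x, ∫ b, G x b ∂μB = gradient f x)
    (wk : EuclideanSpace ℝ (Fin d))
    (w v : ℕ → (Fin E → Bt) → EuclideanSpace ℝ (Fin d))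
    (hw0 : ∀ ω, w 0 ω = wk)
    (hv0 : ∀ ω, v 0 ω = gradient f wk)
    (hv : ∀ τ (h1 : 1 ≤ τ) (h2 : τ < E), ∀ ω,
      v τ ω = G (w τ ω) (ω ⟨τ, h2⟩) + v (τ - 1) ω - G (w (τ - 1) ω) (ω ⟨τ, h2⟩))
    (hw : ∀ τ, τ < E → ∀ ω, w (τ + 1) ω = w τ ω - η • v τ ω)
    (hηL : η < 1 / L)
    (hEcond : (E : ℝ) < (1 / 4) * min (1 / (η * L)) (1 / (η ^ 2 * L ^ 2) - 1 / (η * L))) :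
    ∑ τ ∈ Finset.range E, ∫ ω, ‖v τ ω‖ ^ 2 ∂(Measure.pi fun _ : Fin E => μB)
      ≤ 16 * (E : ℝ) * ‖gradient f wk‖ ^ 2 := by
  set g := gradient f wk with hg
  set c := η * L with hc
  have hc0 : 0 < c := mul_pos hη hL
  have hEc : (E : ℝ) * c < 1 / 4 := by
    have h1 : (E : ℝ) < (1/4) * (1 / c) := lt_of_lt_of_le hEcond (by
      gcongr; exact min_le_left _ _)
    have := (mul_lt_mul_of_pos_right h1 hc0)
    calc (E : ℝ) * c < (1/4) * (1/c) * c := this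
      _ = 1/4 := by field_simp
  have hc1 : c < 1 := by
    have hE1 : (1 : ℝ) ≤ E := by exact_mod_cast hE
    nlinarith
  -- pointwise bound on ‖v τ ω‖
  have key : ∀ τ, τ < E → ∀ ω, ‖v τ ω‖ ≤ (1 + c) ^ τ * ‖g‖ := by
    intro τ
    induction τ with
    | zero => intro _ ω; simp [hv0 ω, hg]
    | succ τ ih =>
      intro hτE ω
      have hτ : τ < E := Nat.lt_of_succ_lt hτE
      have h1 : 1 ≤ τ + 1 := Nat.le_add_left 1 τ
      have hrec := hv (τ + 1) h1 hτE ω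
      simp only [Nat.add_sub_cancel] at hrec
      have hwrec := hw τ hτ ω
      have hdiff : ‖G (w (τ+1) ω) (ω ⟨τ+1, hτE⟩) - G (w τ ω) (ω ⟨τ+1, hτE⟩)‖
          ≤ L * ‖w (τ+1) ω - w τ ω‖ := hGlip _ _ _
      have hstep : ‖w (τ+1) ω - w τ ω‖ = η * ‖v τ ω‖ := by
        rw [hwrec]; simp [norm_smul, abs_of_pos hη]
      have hb : ‖v (τ+1) ω‖ ≤ ‖v τ ω‖ + L * (η * ‖v τ ω‖) := by
        rw [hrec]
        calc ‖G (w (τ+1) ω) (ω ⟨τ+1, hτE⟩) + v τ ω - G (w τ ω) (ω ⟨τ+1, hτE⟩)‖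
            = ‖v τ ω + (G (w (τ+1) ω) (ω ⟨τ+1, hτE⟩) - G (w τ ω) (ω ⟨τ+1, hτE⟩))‖ := by
              exact congrArg norm (by abel)
          _ ≤ ‖v τ ω‖ + ‖G (w (τ+1) ω) (ω ⟨τ+1, hτE⟩) - G (w τ ω) (ω ⟨τ+1, hτE⟩)‖ :=
              norm_add_le _ _
          _ ≤ ‖v τ ω‖ + L * ‖w (τ+1) ω - w τ ω‖ := by linarith
          _ = ‖v τ ω‖ + L * (η * ‖v τ ω‖) := by rw [hstep]
      have := ih hτ ω
      calc ‖v (τ+1) ω‖ ≤ (1 + c) * ‖v τ ω‖ := by rw [hc]; nlinarith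
        _ ≤ (1 + c) * ((1 + c) ^ τ * ‖g‖) := by
            apply mul_le_mul_of_nonneg_left this; nlinarith
        _ = (1 + c) ^ (τ + 1) * ‖g‖ := by ring
  -- geometric factor bound: (1+c)^τ ≤ 4 for τ < E
  have pow4 : ∀ τ, τ < E → (1 + c) ^ τ ≤ 4 := by
    intro τ hτ
    have hτc : (τ : ℝ) * c ≤ (E : ℝ) * c := by
      apply mul_le_mul_of_nonneg_right _ hc0.le
      exact_mod_cast hτ.le
    have hlow : (3 : ℝ) / 4 ≤ (1 - c) ^ τ := by
      have := one_add_mul_le_pow (a := -c) (by linarith) τ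
      have : 1 - (τ : ℝ) * c ≤ (1 - c) ^ τ := by
        simpa [mul_comm, sub_eq_add_neg] using this
      linarith
    have hpos : (0 : ℝ) < (1 - c) ^ τ := lt_of_lt_of_le (by norm_num) hlow
    have hprod : (1 + c) ^ τ * (1 - c) ^ τ ≤ 1 := by
      rw [← mul_pow]
      have h1 : (1 + c) * (1 - c) = 1 - c ^ 2 := by ring
      rw [h1]
      apply pow_le_one₀ <;> nlinarith
    nlinarith [pow_nonneg (by linarith : (0:ℝ) ≤ 1 + c) τ]
  -- per-term integral bound
  have hterm : ∀ τ, τ < E →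
      ∫ ω, ‖v τ ω‖ ^ 2 ∂(Measure.pi fun _ : Fin E => μB) ≤ 16 * ‖g‖ ^ 2 := by
    intro τ hτ
    have hptw : ∀ ω, ‖v τ ω‖ ^ 2 ≤ 16 * ‖g‖ ^ 2 := by
      intro ω
      have h1 := key τ hτ ω
      have h2 := pow4 τ hτ
      have h3 : (0:ℝ) ≤ (1 + c) ^ τ := pow_nonneg (by linarith) τ
      have h4 : ‖v τ ω‖ ≤ 4 * ‖g‖ := by
        calc ‖v τ ω‖ ≤ (1 + c) ^ τ * ‖g‖ := h1
          _ ≤ 4 * ‖g‖ := by apply mul_le_mul_of_nonneg_right h2 (norm_nonneg _)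
      nlinarith [norm_nonneg (v τ ω), norm_nonneg g]
    by_cases hint : Integrable (fun ω => ‖v τ ω‖ ^ 2) (Measure.pi fun _ : Fin E => μB)
    · calc ∫ ω, ‖v τ ω‖ ^ 2 ∂(Measure.pi fun _ : Fin E => μB)
          ≤ ∫ _ω, 16 * ‖g‖ ^ 2 ∂(Measure.pi fun _ : Fin E => μB) :=
            integral_mono hint (integrable_const _) hptw
        _ = 16 * ‖g‖ ^ 2 := by simp
    · rw [integral_undef hint]; positivity
  calc ∑ τ ∈ Finset.range E, ∫ ω, ‖v τ ω‖ ^ 2 ∂(Measure.pi fun _ : Fin E => μB)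
      ≤ ∑ _τ ∈ Finset.range E, 16 * ‖g‖ ^ 2 := by
        apply Finset.sum_le_sum
        intro τ hτ
        exact hterm τ (Finset.mem_range.mp hτ)
    _ = 16 * (E : ℝ) * ‖g‖ ^ 2 := by
        rw [Finset.sum_const, Finset.card_range, nsmul_eq_mul]; ring
end

section
/- For a single client running the local-momentum (SPIDER-style) recursion with an L-smooth objective f_i, if η < 1/L and E < (1/4)·min(1/(ηL), 1/(η²L²) − 1/(ηL)), then the expected local function decrease over one round is bounded: f_i(w_k) − E[f_i(w_{k,E}^{(i)})] ≤ 4ηE·‖∇f_i(w_k)‖², where the expectation is over the batches B_{k,1}^{(i)},…,B_{k,E−1}^{(i)}. -/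
open MeasureTheory Finset

/-- Auxiliary iteration for `stmt8`: a measurable version of the SPIDER recursion. -/
noncomputable def stmt8Iter {X Bt : Type*} [AddCommGroup X] [Module ℝ X]
    (H : X → Bt → X) (η : ℝ) (E : ℕ) (wk v0 : X) (ω : Fin E → Bt) : ℕ → X × X
  | 0 => (wk, v0)
  | (τ+1) =>
    let p := stmt8Iter H η E wk v0 ω τ
    (p.1 - η • p.2,
      if h : τ + 1 < E then H (p.1 - η • p.2) (ω ⟨τ+1, h⟩) + p.2 - H p.1 (ω ⟨τ+1, h⟩) else 0)

set_option maxHeartbeats 2000000 in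
/-- Lemma "fl-lem3".
A single client with an `L`-smooth objective `f` runs the SPIDER-style local-momentum
recursion in a round starting at `wk = w_k`; the batches `B_{k,1},…,B_{k,E−1}` are the
coordinates of the product probability space `Fin E → Bt`, the stochastic gradients
`G · b` are `L`-Lipschitz and unbiased.  If `η < 1/L` and
`E < (1/4)·min(1/(ηL), 1/(η²L²) − 1/(ηL))`, then the expected local decrease over one
round satisfies `f(w_k) − E[f(w_{k,E})] ≤ 4ηE·‖∇f(w_k)‖²`. -/
theorem stmt8
    {d : ℕ} {Bt : Type*} [MeasurableSpace Bt]
    (μB : Measure Bt) [IsProbabilityMeasure μB]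
    (E : ℕ) (hE : 1 ≤ E) (η L : ℝ) (hη : 0 < η) (hL : 0 < L)
    (f : EuclideanSpace ℝ (Fin d) → ℝ)
    (hdiff : Differentiable ℝ f)
    (hsmooth : ∀ x y, ‖gradient f x - gradient f y‖ ≤ L * ‖x - y‖)
    (G : EuclideanSpace ℝ (Fin d) → Bt → EuclideanSpace ℝ (Fin d))
    (hGlip : ∀ b x y, ‖G x b - G y b‖ ≤ L * ‖x - y‖)
    (hGint : ∀ x, Integrable (G x) μB)
    (hGunb : ∀ x, ∫ b, G x b ∂μB = gradient f x)
    (wk : EuclideanSpace ℝ (Fin d))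
    (w v : ℕ → (Fin E → Bt) → EuclideanSpace ℝ (Fin d))
    (hw0 : ∀ ω, w 0 ω = wk)
    (hv0 : ∀ ω, v 0 ω = gradient f wk)
    (hv : ∀ τ (h1 : 1 ≤ τ) (h2 : τ < E), ∀ ω,
      v τ ω = G (w τ ω) (ω ⟨τ, h2⟩) + v (τ - 1) ω - G (w (τ - 1) ω) (ω ⟨τ, h2⟩))
    (hw : ∀ τ, τ < E → ∀ ω, w (τ + 1) ω = w τ ω - η • v τ ω)
    (hηL : η < 1 / L)
    (hEcond : (E : ℝ) < (1 / 4) * min (1 / (η * L)) (1 / (η ^ 2 * L ^ 2) - 1 / (η * L))) :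
    f wk - ∫ ω, f (w E ω) ∂(Measure.pi fun _ : Fin E => μB)
      ≤ 4 * η * (E : ℝ) * ‖gradient f wk‖ ^ 2 := by
  classical
  set g : EuclideanSpace ℝ (Fin d) := gradient f wk with hgdef
  set a : ℝ := η * L with hadef
  have ha0 : 0 < a := mul_pos hη hL
  have hE1 : (1 : ℝ) ≤ (E : ℝ) := by exact_mod_cast hE
  -- arithmetic consequences of `hEcond`
  have haE : a * (E : ℝ) < 1 / 4 := by
    have h1 : (E : ℝ) < 1 / 4 * (1 / a) := by
      refine hEcond.trans_le ?_
      have := min_le_left (1 / (η * L)) (1 / (η ^ 2 * L ^ 2) - 1 / (η * L))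
      nlinarith
    have h2 : a * (E : ℝ) < a * (1 / 4 * (1 / a)) := by
      exact mul_lt_mul_of_pos_left h1 ha0
    have h3 : a * (1 / 4 * (1 / a)) = 1 / 4 := by
      field_simp
    linarith
  have ha1 : a < 1 / 4 := by nlinarith
  -- bound on powers of (1 + a)
  have hpow : ∀ τ : ℕ, τ ≤ E → (1 + a) ^ τ ≤ 4 / 3 := by
    intro τ hτ
    have hτE : (τ : ℝ) ≤ (E : ℝ) := by exact_mod_cast hτ
    have hber : 1 - (τ : ℝ) * a ≤ (1 - a) ^ τ := by
      have := one_add_mul_le_pow (a := -a) (by linarith) τ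
      have h1 : (1 : ℝ) + (τ : ℝ) * (-a) = 1 - (τ : ℝ) * a := by ring
      have h2 : (1 : ℝ) + (-a) = 1 - a := by ring
      rw [h1, h2] at this
      exact this
    have h34 : (3 / 4 : ℝ) ≤ (1 - a) ^ τ := by
      have : a * (τ : ℝ) ≤ a * (E : ℝ) := by
        exact mul_le_mul_of_nonneg_left hτE ha0.le
      nlinarith
    have hprod : (1 - a) ^ τ * (1 + a) ^ τ ≤ 1 := by
      rw [← mul_pow]
      calc ((1 - a) * (1 + a)) ^ τ ≤ 1 ^ τ := by
            apply pow_le_pow_left₀ (by nlinarith) (by nlinarith)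
        _ = 1 := one_pow τ
    have hP : (0 : ℝ) ≤ (1 + a) ^ τ := by positivity
    nlinarith [mul_le_mul_of_nonneg_right h34 hP]
  -- bound on ‖v τ ω‖
  have hvb : ∀ τ : ℕ, τ < E → ∀ ω, ‖v τ ω‖ ≤ (1 + a) ^ τ * ‖g‖ := by
    intro τ
    induction τ with
    | zero => intro _ ω; simp [hv0 ω, hgdef]
    | succ τ ih =>
      intro hτ ω
      have hτE : τ < E := Nat.lt_of_succ_lt hτ
      have h1 : v (τ + 1) ω
          = G (w (τ + 1) ω) (ω ⟨τ + 1, hτ⟩) + v τ ω - G (w τ ω) (ω ⟨τ + 1, hτ⟩) := by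
        have := hv (τ + 1) (by omega) hτ ω
        simpa using this
      have h2 : w (τ + 1) ω - w τ ω = -(η • v τ ω) := by
        rw [hw τ hτE ω]; abel
      have h3 : ‖G (w (τ + 1) ω) (ω ⟨τ + 1, hτ⟩) - G (w τ ω) (ω ⟨τ + 1, hτ⟩)‖
          ≤ L * (η * ‖v τ ω‖) := by
        calc ‖G (w (τ + 1) ω) (ω ⟨τ + 1, hτ⟩) - G (w τ ω) (ω ⟨τ + 1, hτ⟩)‖
            ≤ L * ‖w (τ + 1) ω - w τ ω‖ := hGlip _ _ _
          _ = L * (η * ‖v τ ω‖) := by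
              rw [h2, norm_neg, norm_smul, Real.norm_eq_abs, abs_of_pos hη]
      have h4 : ‖v (τ + 1) ω‖ ≤ ‖v τ ω‖
          + ‖G (w (τ + 1) ω) (ω ⟨τ + 1, hτ⟩) - G (w τ ω) (ω ⟨τ + 1, hτ⟩)‖ := by
        rw [h1]
        have : G (w (τ + 1) ω) (ω ⟨τ + 1, hτ⟩) + v τ ω - G (w τ ω) (ω ⟨τ + 1, hτ⟩)
            = v τ ω + (G (w (τ + 1) ω) (ω ⟨τ + 1, hτ⟩) - G (w τ ω) (ω ⟨τ + 1, hτ⟩)) := by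
          abel
        rw [this]
        exact norm_add_le _ _
      have h5 : ‖v τ ω‖ ≤ (1 + a) ^ τ * ‖g‖ := ih hτE ω
      have h6 : (1 + a) ^ (τ + 1) = (1 + a) ^ τ * (1 + a) := pow_succ _ _
      have h7 : (0 : ℝ) ≤ (1 + a) ^ τ := by positivity
      calc ‖v (τ + 1) ω‖ ≤ ‖v τ ω‖ + L * (η * ‖v τ ω‖) := by linarith
        _ = (1 + a) * ‖v τ ω‖ := by rw [hadef]; ring
        _ ≤ (1 + a) * ((1 + a) ^ τ * ‖g‖) := by
            apply mul_le_mul_of_nonneg_left h5 (by linarith)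
        _ = (1 + a) ^ (τ + 1) * ‖g‖ := by rw [h6]; ring
  -- bound on ‖w τ ω - wk‖
  have hwb : ∀ τ : ℕ, τ ≤ E → ∀ ω, ‖w τ ω - wk‖ ≤ η * (τ : ℝ) * (4 / 3 * ‖g‖) := by
    intro τ
    induction τ with
    | zero => intro _ ω; simp [hw0 ω]
    | succ τ ih =>
      intro hτ ω
      have hτE : τ < E := hτ
      have h1 : ‖w (τ + 1) ω - wk‖ ≤ ‖w τ ω - wk‖ + η * ‖v τ ω‖ := by
        rw [hw τ hτE ω]
        have : w τ ω - η • v τ ω - wk = (w τ ω - wk) + (-(η • v τ ω)) := by abel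
        rw [this]
        refine (norm_add_le _ _).trans ?_
        rw [norm_neg, norm_smul, Real.norm_eq_abs, abs_of_pos hη]
      have h2 : ‖v τ ω‖ ≤ 4 / 3 * ‖g‖ := by
        refine (hvb τ hτE ω).trans ?_
        exact mul_le_mul_of_nonneg_right (hpow τ hτE.le) (norm_nonneg _)
      have h3 := ih hτE.le ω
      have : ((τ : ℝ) + 1) = ((τ + 1 : ℕ) : ℝ) := by push_cast; ring
      have h4 : η * ‖v τ ω‖ ≤ η * (4 / 3 * ‖g‖) :=
        mul_le_mul_of_nonneg_left h2 hη.le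
      calc ‖w (τ + 1) ω - wk‖ ≤ η * (τ : ℝ) * (4 / 3 * ‖g‖) + η * (4 / 3 * ‖g‖) := by
            linarith
        _ = η * ((τ : ℝ) + 1) * (4 / 3 * ‖g‖) := by ring
        _ = η * ((τ + 1 : ℕ) : ℝ) * (4 / 3 * ‖g‖) := by rw [this]
  -- the radius
  set R : ℝ := η * (E : ℝ) * (4 / 3 * ‖g‖) with hRdef
  have hR0 : 0 ≤ R := by positivity
  -- norms of fderivs vs gradients
  have hfdg : ∀ x y : EuclideanSpace ℝ (Fin d), ‖fderiv ℝ f x - fderiv ℝ f y‖ = ‖gradient f x - gradient f y‖ := by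
    intro x y
    have h1 : gradient f x - gradient f y
        = (InnerProductSpace.toDual ℝ (EuclideanSpace ℝ (Fin d))).symm (fderiv ℝ f x - fderiv ℝ f y) := by
      simp [gradient, map_sub]
    rw [h1, LinearIsometryEquiv.norm_map]
  have hfdnorm : ‖fderiv ℝ f wk‖ = ‖g‖ := by
    rw [hgdef]
    simp [gradient, LinearIsometryEquiv.norm_map]
  -- mean value bound
  have hkeyabs : ∀ y : EuclideanSpace ℝ (Fin d), ‖y - wk‖ ≤ R → |f y - f wk| ≤ ‖g‖ * R + L * R * R := by
    intro y hy
    have hball : y ∈ Metric.closedBall wk R := by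
      simpa [Metric.mem_closedBall, dist_eq_norm] using hy
    have hwkb : wk ∈ Metric.closedBall wk R := Metric.mem_closedBall_self hR0
    have hmvt := (convex_closedBall wk R).norm_image_sub_le_of_norm_fderiv_le'
      (f := f) (φ := fderiv ℝ f wk) (C := L * R)
      (fun z _ => hdiff z)
      (fun z hz => by
        rw [hfdg]
        refine (hsmooth z wk).trans ?_
        have : ‖z - wk‖ ≤ R := by
          simpa [Metric.mem_closedBall, dist_eq_norm] using hz
        exact mul_le_mul_of_nonneg_left this hL.le)
      hwkb hball
    have hφ : |(fderiv ℝ f wk) (y - wk)| ≤ ‖g‖ * R := by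
      calc |(fderiv ℝ f wk) (y - wk)| ≤ ‖fderiv ℝ f wk‖ * ‖y - wk‖ :=
            (fderiv ℝ f wk).le_opNorm _
        _ ≤ ‖g‖ * R := by
            rw [hfdnorm]
            exact mul_le_mul_of_nonneg_left hy (norm_nonneg _)
    have habs : |f y - f wk - (fderiv ℝ f wk) (y - wk)| ≤ L * R * ‖y - wk‖ := by
      simpa [Real.norm_eq_abs] using hmvt
    have hLR : L * R * ‖y - wk‖ ≤ L * R * R := by
      exact mul_le_mul_of_nonneg_left hy (by positivity)
    calc |f y - f wk| = |(f y - f wk - (fderiv ℝ f wk) (y - wk)) + (fderiv ℝ f wk) (y - wk)| := by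
          ring_nf
      _ ≤ |f y - f wk - (fderiv ℝ f wk) (y - wk)| + |(fderiv ℝ f wk) (y - wk)| := abs_add_le _ _
      _ ≤ ‖g‖ * R + L * R * R := by linarith
  -- arithmetic: the bound is at most 4ηE‖g‖²
  have harith : ‖g‖ * R + L * R * R ≤ 4 * η * (E : ℝ) * ‖g‖ ^ 2 := by
    have hgn : (0 : ℝ) ≤ ‖g‖ := norm_nonneg _
    have hEn : (0 : ℝ) ≤ (E : ℝ) := by positivity
    have h5 : (η * L * (E : ℝ)) * (η * (E : ℝ) * ‖g‖ ^ 2)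
        ≤ (1 / 4) * (η * (E : ℝ) * ‖g‖ ^ 2) := by
      apply mul_le_mul_of_nonneg_right _ (by positivity)
      rw [← hadef]; linarith [haE]
    rw [hRdef]
    nlinarith [sq_nonneg ‖g‖, mul_nonneg (mul_nonneg hη.le hEn) (sq_nonneg ‖g‖)]
  have hkey : ∀ ω, f wk - f (w E ω) ≤ 4 * η * (E : ℝ) * ‖g‖ ^ 2 := by
    intro ω
    have h := hkeyabs (w E ω) (hwb E le_rfl ω)
    have := abs_le.mp h
    linarith
  -- ######## measurability ########
  have hXne : Nonempty (EuclideanSpace ℝ (Fin d)) := ⟨0⟩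
  set u : ℕ → EuclideanSpace ℝ (Fin d) := TopologicalSpace.denseSeq (EuclideanSpace ℝ (Fin d)) with hudef
  have hu : DenseRange u := TopologicalSpace.denseRange_denseSeq (EuclideanSpace ℝ (Fin d))
  -- measurable versions of G at points of the dense sequence
  have hGm : ∀ n : ℕ, ∃ gn : Bt → EuclideanSpace ℝ (Fin d), StronglyMeasurable gn ∧ G (u n) =ᵐ[μB] gn := fun n =>
    ⟨(hGint (u n)).1.mk _, (hGint (u n)).1.stronglyMeasurable_mk, (hGint (u n)).1.ae_eq_mk⟩
  choose gn hgnm hgne using hGm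
  have hNn : ∀ n : ℕ, ∃ Nn : Set Bt, MeasurableSet Nn ∧ μB Nn = 0 ∧
      ∀ b ∉ Nn, G (u n) b = gn n b := by
    intro n
    have h0 : μB {b | ¬ G (u n) b = gn n b} = 0 := hgne n
    obtain ⟨t, hsub, htm, ht0⟩ := exists_measurable_superset_of_null h0
    refine ⟨t, htm, ht0, fun b hb => ?_⟩
    by_contra hc
    exact hb (hsub hc)
  choose Nn hNnm hNn0 hNnp using hNn
  set N : Set Bt := ⋃ n, Nn n with hNdef
  have hNm : MeasurableSet N := MeasurableSet.iUnion hNnm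
  have hN0 : μB N = 0 := measure_iUnion_null hNn0
  set H : EuclideanSpace ℝ (Fin d) → Bt → EuclideanSpace ℝ (Fin d) := fun x b => if b ∈ N then 0 else G x b with hHdef
  have hHeq : ∀ x b, b ∉ N → H x b = G x b := by
    intro x b hb; simp [hHdef, hb]
  have hHcont : ∀ b, Continuous fun x => H x b := by
    intro b
    by_cases hb : b ∈ N
    · have : (fun x : EuclideanSpace ℝ (Fin d) => H x b) = fun _ => 0 := by
        funext x; simp [hHdef, hb]
      rw [this]; exact continuous_const
    · have : (fun x : EuclideanSpace ℝ (Fin d) => H x b) = fun x => G x b := by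
        funext x; simp [hHdef, hb]
      rw [this]
      refine (LipschitzWith.of_dist_le_mul (K := L.toNNReal) (f := fun x => G x b) ?_).continuous
      intro x y
      rw [dist_eq_norm, dist_eq_norm, Real.coe_toNNReal _ hL.le]
      exact hGlip b x y
  have hHmeas : ∀ x, StronglyMeasurable (H x) := by
    intro x
    obtain ⟨φ, hφmem, hφtend⟩ : ∃ φ : ℕ → EuclideanSpace ℝ (Fin d), (∀ k, φ k ∈ Set.range u) ∧
        Filter.Tendsto φ Filter.atTop (nhds x) := by
      have hx : x ∈ closure (Set.range u) := by
        rw [hu.closure_range]; trivial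
      exact mem_closure_iff_seq_limit.mp hx
    choose nk hnk using hφmem
    have hFm : ∀ k : ℕ, StronglyMeasurable fun b => if b ∈ N then (0 : EuclideanSpace ℝ (Fin d)) else gn (nk k) b := by
      intro k
      have := (hgnm (nk k)).indicator hNm.compl
      have heq : Set.indicator Nᶜ (gn (nk k)) = fun b => if b ∈ N then (0 : EuclideanSpace ℝ (Fin d)) else gn (nk k) b := by
        funext b
        by_cases hb : b ∈ N <;> simp [Set.indicator_apply, hb]
      rwa [heq] at this
    refine stronglyMeasurable_of_tendsto (f := fun k b => if b ∈ N then (0 : EuclideanSpace ℝ (Fin d)) else gn (nk k) b)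
      Filter.atTop hFm ?_
    rw [tendsto_pi_nhds]
    intro b
    by_cases hb : b ∈ N
    · simp only [hb, if_true, hHdef]
      exact tendsto_const_nhds
    · simp only [hb, if_false]
      have hGb : ∀ k, gn (nk k) b = G (φ k) b := by
        intro k
        have hbn : b ∉ Nn (nk k) := fun hc => hb (Set.mem_iUnion.mpr ⟨nk k, hc⟩)
        rw [← hNnp (nk k) b hbn, hnk k]
      have hHxb : H x b = G x b := hHeq x b hb
      rw [hHxb]
      have hdist : ∀ k, dist (gn (nk k) b) (G x b) ≤ L * dist (φ k) x := by
        intro k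
        rw [hGb k, dist_eq_norm, dist_eq_norm]
        exact hGlip b _ _
      have hd0 : Filter.Tendsto (fun k => L * dist (φ k) x) Filter.atTop (nhds 0) := by
        have := (tendsto_iff_dist_tendsto_zero.mp hφtend)
        simpa using this.const_mul L
      refine tendsto_iff_dist_tendsto_zero.mpr ?_
      exact squeeze_zero (fun k => dist_nonneg) hdist hd0
  have HH : StronglyMeasurable (Function.uncurry H) :=
    stronglyMeasurable_uncurry_of_continuous_of_stronglyMeasurable hHcont hHmeas
  -- the measurable iteration
  set iter : (Fin E → Bt) → ℕ → EuclideanSpace ℝ (Fin d) × EuclideanSpace ℝ (Fin d) := fun ω => stmt8Iter H η E wk g ω with hiterdef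
  have hiterm : ∀ τ : ℕ, StronglyMeasurable fun ω => iter ω τ := by
    intro τ
    induction τ with
    | zero => exact stronglyMeasurable_const
    | succ τ ih =>
      have ihw : StronglyMeasurable fun ω => (iter ω τ).1 :=
        continuous_fst.comp_stronglyMeasurable ih
      have ihv : StronglyMeasurable fun ω => (iter ω τ).2 :=
        continuous_snd.comp_stronglyMeasurable ih
      have hw' : StronglyMeasurable fun ω => (iter ω τ).1 - η • (iter ω τ).2 :=
        ihw.sub (ihv.const_smul η)
      have hsnd : StronglyMeasurable fun ω =>
          (if h : τ + 1 < E then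
            H ((iter ω τ).1 - η • (iter ω τ).2) (ω ⟨τ+1, h⟩) + (iter ω τ).2
              - H ((iter ω τ).1) (ω ⟨τ+1, h⟩) else 0) := by
        by_cases h : τ + 1 < E
        · simp only [h, dif_pos]
          have h1 : StronglyMeasurable fun ω =>
              H ((iter ω τ).1 - η • (iter ω τ).2) (ω ⟨τ+1, h⟩) := by
            have : (fun ω => H ((iter ω τ).1 - η • (iter ω τ).2) (ω ⟨τ+1, h⟩))
                = Function.uncurry H ∘ fun ω =>
                    (((iter ω τ).1 - η • (iter ω τ).2), ω ⟨τ+1, h⟩) := rfl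
            rw [this]
            exact HH.comp_measurable (hw'.measurable.prodMk (measurable_pi_apply _))
          have h2 : StronglyMeasurable fun ω => H ((iter ω τ).1) (ω ⟨τ+1, h⟩) := by
            have : (fun ω => H ((iter ω τ).1) (ω ⟨τ+1, h⟩))
                = Function.uncurry H ∘ fun ω => ((iter ω τ).1, ω ⟨τ+1, h⟩) := rfl
            rw [this]
            exact HH.comp_measurable (ihw.measurable.prodMk (measurable_pi_apply _))
          exact (h1.add ihv).sub h2
        · simp only [h, dif_neg, not_false_iff]
          exact stronglyMeasurable_const
      have heq : (fun ω => iter ω (τ + 1)) = fun ω =>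
          ((iter ω τ).1 - η • (iter ω τ).2,
            if h : τ + 1 < E then
              H ((iter ω τ).1 - η • (iter ω τ).2) (ω ⟨τ+1, h⟩) + (iter ω τ).2
                - H ((iter ω τ).1) (ω ⟨τ+1, h⟩) else 0) := by
        funext ω
        simp [hiterdef, stmt8Iter]
      rw [heq]
      exact hw'.prodMk hsnd
  -- consistency on good ω
  have hcons : ∀ ω, (∀ j : Fin E, ω j ∉ N) → ∀ τ : ℕ, τ ≤ E →
      w τ ω = (iter ω τ).1 ∧ (τ < E → v τ ω = (iter ω τ).2) := by
    intro ω hω τ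
    induction τ with
    | zero =>
      intro _
      constructor
      · rw [hw0 ω]; simp [hiterdef, stmt8Iter]
      · intro _; rw [hv0 ω]; simp [hiterdef, stmt8Iter, hgdef]
    | succ τ ih =>
      intro hτ1
      have hτE : τ < E := Nat.lt_of_lt_of_le (Nat.lt_succ_self τ) hτ1
      obtain ⟨ihw, ihv⟩ := ih hτE.le
      have hvτ : v τ ω = (iter ω τ).2 := ihv hτE
      have hfst : w (τ + 1) ω = (iter ω (τ + 1)).1 := by
        rw [hw τ hτE ω, ihw, hvτ]
        simp [hiterdef, stmt8Iter]
      refine ⟨hfst, ?_⟩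
      intro hsE
      have hrec := hv (τ + 1) (by omega) hsE ω
      simp only [Nat.add_sub_cancel] at hrec
      have hb : ω ⟨τ + 1, hsE⟩ ∉ N := hω _
      have hsnd : (iter ω (τ + 1)).2
          = H ((iter ω τ).1 - η • (iter ω τ).2) (ω ⟨τ+1, hsE⟩) + (iter ω τ).2
              - H ((iter ω τ).1) (ω ⟨τ+1, hsE⟩) := by
        simp [hiterdef, stmt8Iter, hsE]
      have hfst' : (iter ω (τ + 1)).1 = (iter ω τ).1 - η • (iter ω τ).2 := by
        simp [hiterdef, stmt8Iter]
      rw [hrec, hsnd, hHeq _ _ hb, hHeq _ _ hb, ← hfst', ← hfst, ← ihw, ← hvτ]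
  -- a.e. equality and integrability
  set π : Measure (Fin E → Bt) := Measure.pi fun _ : Fin E => μB with hπdef
  have hbad : π {ω | ¬ ∀ j : Fin E, ω j ∉ N} = 0 := by
    refine measure_mono_null (t := ⋃ j : Fin E, Function.eval j ⁻¹' N) ?_ ?_
    · intro ω hω
      simp only [Set.mem_setOf_eq, not_forall, not_not] at hω
      obtain ⟨j, hj⟩ := hω
      exact Set.mem_iUnion.mpr ⟨j, hj⟩
    · exact measure_iUnion_null fun j => Measure.pi_eval_preimage_null _ hN0
  have hae : ∀ᵐ ω ∂π, ∀ j : Fin E, ω j ∉ N := by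
    rw [Filter.eventually_iff, mem_ae_iff]
    have hseteq : {x : Fin E → Bt | ∀ (j : Fin E), x j ∉ N}ᶜ
        = {ω : Fin E → Bt | ¬ ∀ j : Fin E, ω j ∉ N} := rfl
    rw [hseteq]
    exact hbad
  have haeeq : (fun ω => f (w E ω)) =ᵐ[π] fun ω => f ((iter ω E).1) := by
    filter_upwards [hae] with ω hω
    rw [(hcons ω hω E le_rfl).1]
  have hmeas2 : AEStronglyMeasurable (fun ω => f (w E ω)) π := by
    have h1 : StronglyMeasurable fun ω => f ((iter ω E).1) :=
      hdiff.continuous.comp_stronglyMeasurable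
        (continuous_fst.comp_stronglyMeasurable (hiterm E))
    exact h1.aestronglyMeasurable.congr haeeq.symm
  have hint : Integrable (fun ω => f (w E ω)) π := by
    refine Integrable.mono' (integrable_const (|f wk| + (‖g‖ * R + L * R * R))) hmeas2
      (Filter.Eventually.of_forall fun ω => ?_)
    rw [Real.norm_eq_abs]
    have h := hkeyabs (w E ω) (hwb E le_rfl ω)
    have := abs_sub_abs_le_abs_sub (f (w E ω)) (f wk)
    linarith
  haveI : IsProbabilityMeasure π := by
    rw [hπdef]; infer_instance
  have hfinal : f wk - 4 * η * (E : ℝ) * ‖g‖ ^ 2 ≤ ∫ ω, f (w E ω) ∂π := by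
    have hmono := integral_mono (integrable_const (f wk - 4 * η * (E : ℝ) * ‖g‖ ^ 2)) hint
      (fun ω => by have := hkey ω; simpa using (by linarith : f wk - 4 * η * (E : ℝ) * ‖g‖ ^ 2 ≤ f (w E ω)))
    simpa [integral_const, measure_univ] using hmono
  linarith
end

section
/- For a single client running the local-momentum (SPIDER-style) recursion with an L-smooth objective f_i, if η < 1/L and E < (1/4)·min(1/(ηL), 1/(η²L²) − 1/(ηL)), then the accumulated gradient-estimation error satisfies Σ_{τ=0}^{E−1} E[‖e_{k,τ}^{(i)}‖²] ≤ 32E²η²L²·‖∇f_i(w_k)‖², where e_{k,τ}^{(i)} = v_{k,τ}^{(i)} − ∇f_i(w_{k,τ}^{(i)}) and the expectation is over the batches B_{k,1}^{(i)},…,B_{k,E−1}^{(i)}. -/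
open MeasureTheory Finset

open Filter RealInnerProductSpace in
set_option maxHeartbeats 4000000 in
/-- Lemma "fl-lem-new2".
A single client with an `L`-smooth objective `f` runs the SPIDER-style local-momentum
recursion in a round starting at `wk = w_k`; the batches `B_{k,1},…,B_{k,E−1}` are the
coordinates of the product probability space `Fin E → Bt`, the stochastic gradients
`G · b` are `L`-Lipschitz and unbiased.  If `η < 1/L` and
`E < (1/4)·min(1/(ηL), 1/(η²L²) − 1/(ηL))`, then
the accumulated gradient-estimation error `e_{k,τ} = v_{k,τ} − ∇f(w_{k,τ})` satisfies
`Σ_{τ=0}^{E−1} E[‖e_{k,τ}‖²] ≤ 32E²η²L²·‖∇f(w_k)‖²`. -/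
theorem stmt9
    {d : ℕ} {Bt : Type*} [MeasurableSpace Bt]
    (μB : Measure Bt) [IsProbabilityMeasure μB]
    (E : ℕ) (hE : 1 ≤ E) (η L : ℝ) (hη : 0 < η) (hL : 0 < L)
    (f : EuclideanSpace ℝ (Fin d) → ℝ)
    (hdiff : Differentiable ℝ f)
    (hsmooth : ∀ x y, ‖gradient f x - gradient f y‖ ≤ L * ‖x - y‖)
    (G : EuclideanSpace ℝ (Fin d) → Bt → EuclideanSpace ℝ (Fin d))
    (hGlip : ∀ b x y, ‖G x b - G y b‖ ≤ L * ‖x - y‖)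
    (hGint : ∀ x, Integrable (G x) μB)
    (hGunb : ∀ x, ∫ b, G x b ∂μB = gradient f x)
    (wk : EuclideanSpace ℝ (Fin d))
    (w v : ℕ → (Fin E → Bt) → EuclideanSpace ℝ (Fin d))
    (hw0 : ∀ ω, w 0 ω = wk)
    (hv0 : ∀ ω, v 0 ω = gradient f wk)
    (hv : ∀ τ (h1 : 1 ≤ τ) (h2 : τ < E), ∀ ω,
      v τ ω = G (w τ ω) (ω ⟨τ, h2⟩) + v (τ - 1) ω - G (w (τ - 1) ω) (ω ⟨τ, h2⟩))
    (hw : ∀ τ, τ < E → ∀ ω, w (τ + 1) ω = w τ ω - η • v τ ω)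
    (hηL : η < 1 / L)
    (hEcond : (E : ℝ) < (1 / 4) * min (1 / (η * L)) (1 / (η ^ 2 * L ^ 2) - 1 / (η * L))) :
    ∑ τ ∈ Finset.range E,
        ∫ ω, ‖v τ ω - gradient f (w τ ω)‖ ^ 2 ∂(Measure.pi fun _ : Fin E => μB)
      ≤ 32 * (E : ℝ) ^ 2 * η ^ 2 * L ^ 2 * ‖gradient f wk‖ ^ 2 := by
  obtain ⟨n, rfl⟩ : ∃ n, E = n + 1 := ⟨E - 1, by omega⟩
  set μ : Measure (Fin (n + 1) → Bt) := Measure.pi fun _ : Fin (n + 1) => μB with hμdef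
  set a : ℝ := η * L with hadef
  have ha0 : 0 < a := by rw [hadef]; exact mul_pos hη hL
  set g : ℝ := ‖gradient f wk‖ with hgdef
  clear_value a g
  have hg0 : 0 ≤ g := by rw [hgdef]; exact norm_nonneg _
  -- the step-size condition
  have haE : a * ((n : ℝ) + 1) < 1 / 4 := by
    have h1 : ((n : ℝ) + 1) < (1 / 4) * (1 / a) := by
      have h2 : (1 / 4 : ℝ) * min (1 / a) (1 / (η ^ 2 * L ^ 2) - 1 / a)
          ≤ (1 / 4) * (1 / a) := by
        have := min_le_left (1 / a) (1 / (η ^ 2 * L ^ 2) - 1 / a)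
        linarith
      have h3 := hEcond
      push_cast at h3
      linarith
    have h4 : a * ((n : ℝ) + 1) < a * ((1 / 4) * (1 / a)) :=
      mul_lt_mul_of_pos_left h1 ha0
    have h5 : a * ((1 / 4) * (1 / a)) = 1 / 4 := by
      field_simp
    linarith
  -- explicit formula for `w`
  have hwsum : ∀ τ, τ ≤ n + 1 → ∀ ω, w τ ω = wk - η • ∑ s ∈ Finset.range τ, v s ω := by
    intro τ
    induction τ with
    | zero => intro _ ω; simp [hw0]
    | succ t ih =>
        intro h ω
        rw [hw t (by omega) ω, ih (by omega) ω, Finset.sum_range_succ, smul_add, sub_sub]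
  -- pointwise error recursion bound
  have hE2 : ∀ t, t ≤ n → ∀ ω,
      ‖v t ω - gradient f (w t ω)‖ ≤ 2 * a * ∑ s ∈ Finset.range t, ‖v s ω‖ := by
    intro t
    induction t with
    | zero => intro _ ω; simp [hv0, hw0]
    | succ t ih =>
        intro h ω
        have ht1 : t + 1 < n + 1 := by omega
        have hsplit : v (t + 1) ω - gradient f (w (t + 1) ω)
            = (v t ω - gradient f (w t ω)) +
              ((G (w (t + 1) ω) (ω ⟨t + 1, ht1⟩) - G (w t ω) (ω ⟨t + 1, ht1⟩)) -
                (gradient f (w (t + 1) ω) - gradient f (w t ω))) := by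
          rw [hv (t + 1) (by omega) ht1 ω]
          simp only [Nat.add_sub_cancel]
          abel
        have hwdiff : ‖w (t + 1) ω - w t ω‖ = η * ‖v t ω‖ := by
          rw [hw t (by omega) ω]
          simp [norm_smul, abs_of_pos hη]
        have h1 : ‖G (w (t + 1) ω) (ω ⟨t + 1, ht1⟩) - G (w t ω) (ω ⟨t + 1, ht1⟩)‖
            ≤ a * ‖v t ω‖ := by
          have h := hGlip (ω ⟨t + 1, ht1⟩) (w (t + 1) ω) (w t ω)
          rw [hwdiff] at h
          calc ‖G (w (t + 1) ω) (ω ⟨t + 1, ht1⟩) - G (w t ω) (ω ⟨t + 1, ht1⟩)‖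
              ≤ L * (η * ‖v t ω‖) := h
            _ = a * ‖v t ω‖ := by rw [hadef]; ring
        have h2 : ‖gradient f (w (t + 1) ω) - gradient f (w t ω)‖ ≤ a * ‖v t ω‖ := by
          have h := hsmooth (w (t + 1) ω) (w t ω)
          rw [hwdiff] at h
          calc ‖gradient f (w (t + 1) ω) - gradient f (w t ω)‖
              ≤ L * (η * ‖v t ω‖) := h
            _ = a * ‖v t ω‖ := by rw [hadef]; ring
        have h3 := ih (by omega) ω
        calc ‖v (t + 1) ω - gradient f (w (t + 1) ω)‖
            ≤ ‖v t ω - gradient f (w t ω)‖ +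
              ‖(G (w (t + 1) ω) (ω ⟨t + 1, ht1⟩) - G (w t ω) (ω ⟨t + 1, ht1⟩)) -
                (gradient f (w (t + 1) ω) - gradient f (w t ω))‖ := by
              rw [hsplit]; exact norm_add_le _ _
          _ ≤ ‖v t ω - gradient f (w t ω)‖ +
              (‖G (w (t + 1) ω) (ω ⟨t + 1, ht1⟩) - G (w t ω) (ω ⟨t + 1, ht1⟩)‖ +
                ‖gradient f (w (t + 1) ω) - gradient f (w t ω)‖) := by
              have := norm_sub_le (G (w (t + 1) ω) (ω ⟨t + 1, ht1⟩) - G (w t ω) (ω ⟨t + 1, ht1⟩))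
                (gradient f (w (t + 1) ω) - gradient f (w t ω))
              linarith
          _ ≤ 2 * a * ∑ s ∈ Finset.range t, ‖v s ω‖ + 2 * a * ‖v t ω‖ := by
              linarith
          _ = 2 * a * ∑ s ∈ Finset.range (t + 1), ‖v s ω‖ := by
              rw [Finset.sum_range_succ]; ring
  -- pointwise bound on `‖v‖` by geometric growth
  have hvnorm : ∀ τ, τ < n + 1 → ∀ ω, ‖v τ ω‖ ≤ g * (1 + 3 * a) ^ τ := by
    intro τ
    induction τ using Nat.strong_induction_on with
    | _ τ ih =>
      intro hτ ω
      have hwk : ‖w τ ω - wk‖ ≤ η * ∑ s ∈ Finset.range τ, ‖v s ω‖ := by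
        rw [hwsum τ (by omega) ω]
        have : wk - η • ∑ s ∈ Finset.range τ, v s ω - wk = -(η • ∑ s ∈ Finset.range τ, v s ω) := by
          abel
        rw [this, norm_neg, norm_smul, Real.norm_of_nonneg hη.le]
        have := norm_sum_le (Finset.range τ) (fun s => v s ω)
        nlinarith
      have hgrad : ‖gradient f (w τ ω)‖ ≤ g + a * ∑ s ∈ Finset.range τ, ‖v s ω‖ := by
        have h1 := hsmooth (w τ ω) wk
        have h2 : ‖gradient f (w τ ω)‖ ≤ ‖gradient f (w τ ω) - gradient f wk‖ + g := by
          have := norm_sub_norm_le (gradient f (w τ ω)) (gradient f wk)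
          simp only [hgdef]
          linarith [abs_le.mp (abs_norm_sub_norm_le (gradient f (w τ ω)) (gradient f wk))]
        simp only [hadef]
        nlinarith
      have herr := hE2 τ (by omega) ω
      have hvle : ‖v τ ω‖ ≤ g + 3 * a * ∑ s ∈ Finset.range τ, ‖v s ω‖ := by
        have := norm_add_le (v τ ω - gradient f (w τ ω)) (gradient f (w τ ω))
        simp only [sub_add_cancel] at this
        nlinarith
      have hsum : ∑ s ∈ Finset.range τ, ‖v s ω‖ ≤ ∑ s ∈ Finset.range τ, g * (1 + 3 * a) ^ s := by
        apply Finset.sum_le_sum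
        intro s hs
        have hs' := Finset.mem_range.mp hs
        exact ih s hs' (by omega) ω
      have hgeom : (∑ s ∈ Finset.range τ, (1 + 3 * a) ^ s) * (3 * a) = (1 + 3 * a) ^ τ - 1 := by
        have := geom_sum_mul (1 + 3 * a) τ
        simpa using this
      have hmulsum : ∑ s ∈ Finset.range τ, g * (1 + 3 * a) ^ s
          = g * ∑ s ∈ Finset.range τ, (1 + 3 * a) ^ s := by
        rw [Finset.mul_sum]
      calc ‖v τ ω‖ ≤ g + 3 * a * ∑ s ∈ Finset.range τ, ‖v s ω‖ := hvle
        _ ≤ g + 3 * a * ∑ s ∈ Finset.range τ, g * (1 + 3 * a) ^ s := by nlinarith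
        _ = g * (1 + 3 * a) ^ τ := by
            rw [hmulsum]
            linear_combination g * hgeom
  -- uniform bound `‖v‖ ≤ 3 g`
  have hvK : ∀ τ, τ ≤ n → ∀ ω, ‖v τ ω‖ ≤ 3 * g := by
    intro τ hτ ω
    have h1 := hvnorm τ (by omega) ω
    have hb : (1 + 3 * a : ℝ) ≤ Real.exp (3 * a) := by
      have := Real.add_one_le_exp (3 * a)
      linarith
    have h2 : (1 + 3 * a : ℝ) ^ τ ≤ Real.exp (3 * a) ^ τ :=
      pow_le_pow_left₀ (by linarith) hb τ
    have h3 : Real.exp (3 * a) ^ τ = Real.exp ((τ : ℝ) * (3 * a)) := (Real.exp_nat_mul _ τ).symm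
    have h4 : (τ : ℝ) * (3 * a) ≤ 1 := by
      have hτ' : (τ : ℝ) ≤ (n : ℝ) + 1 := by
        have : (τ : ℝ) ≤ (n : ℝ) := by exact_mod_cast hτ
        linarith
      nlinarith [mul_le_mul_of_nonneg_right hτ' (by linarith : (0:ℝ) ≤ 3 * a), haE]
    have h5 : Real.exp ((τ : ℝ) * (3 * a)) ≤ Real.exp 1 := Real.exp_le_exp.mpr h4
    have h6 : Real.exp 1 ≤ 3 := by
      have := Real.exp_one_lt_d9
      linarith
    have h7 : (1 + 3 * a : ℝ) ^ τ ≤ 3 := by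
      rw [h3] at h2
      linarith
    nlinarith [mul_le_mul_of_nonneg_left h7 hg0]
  -- bound on the martingale increment
  have hinc : ∀ t, t < n + 1 → ∀ ω (b : Bt),
      ‖(G (w (t + 1) ω) b - G (w t ω) b) - (gradient f (w (t + 1) ω) - gradient f (w t ω))‖
        ≤ 6 * a * g := by
    intro t ht ω b
    have hwdiff : ‖w (t + 1) ω - w t ω‖ = η * ‖v t ω‖ := by
      rw [hw t ht ω]
      simp [norm_smul, abs_of_pos hη]
    have h1 : ‖G (w (t + 1) ω) b - G (w t ω) b‖ ≤ a * ‖v t ω‖ := by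
      have h := hGlip b (w (t + 1) ω) (w t ω)
      rw [hwdiff] at h
      calc ‖G (w (t + 1) ω) b - G (w t ω) b‖ ≤ L * (η * ‖v t ω‖) := h
        _ = a * ‖v t ω‖ := by rw [hadef]; ring
    have h2 : ‖gradient f (w (t + 1) ω) - gradient f (w t ω)‖ ≤ a * ‖v t ω‖ := by
      have h := hsmooth (w (t + 1) ω) (w t ω)
      rw [hwdiff] at h
      calc ‖gradient f (w (t + 1) ω) - gradient f (w t ω)‖ ≤ L * (η * ‖v t ω‖) := h
        _ = a * ‖v t ω‖ := by rw [hadef]; ring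
    have h3 : ‖v t ω‖ ≤ 3 * g := hvK t (by omega) ω
    have h4 := norm_sub_le (G (w (t + 1) ω) b - G (w t ω) b)
      (gradient f (w (t + 1) ω) - gradient f (w t ω))
    nlinarith [mul_le_mul_of_nonneg_left h3 ha0.le]
  -- dependence: `w τ, v τ` only depend on coordinates `≤ τ`
  have hdep : ∀ τ, τ ≤ n → ∀ ω₁ ω₂ : Fin (n + 1) → Bt,
      (∀ j : Fin (n + 1), (j : ℕ) ≤ τ → ω₁ j = ω₂ j) → w τ ω₁ = w τ ω₂ ∧ v τ ω₁ = v τ ω₂ := by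
    intro τ
    induction τ with
    | zero => intro _ ω₁ ω₂ _; simp [hw0, hv0]
    | succ t ih =>
        intro h ω₁ ω₂ hag
        have hag' : ∀ j : Fin (n + 1), (j : ℕ) ≤ t → ω₁ j = ω₂ j := fun j hj => hag j (by omega)
        obtain ⟨hwt, hvt⟩ := ih (by omega) ω₁ ω₂ hag'
        have hw' : w (t + 1) ω₁ = w (t + 1) ω₂ := by
          rw [hw t (by omega) ω₁, hw t (by omega) ω₂, hwt, hvt]
        refine ⟨hw', ?_⟩
        have hco : ω₁ (⟨t + 1, by omega⟩ : Fin (n + 1)) = ω₂ ⟨t + 1, by omega⟩ :=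
          hag ⟨t + 1, by omega⟩ (by simp)
        rw [hv (t + 1) (by omega) (by omega) ω₁, hv (t + 1) (by omega) (by omega) ω₂]
        simp only [Nat.add_sub_cancel]
        rw [hw', hwt, hvt, hco]
  -- gradient of `f` is continuous
  have hgradcont : Continuous (gradient f) := by
    have : LipschitzWith (Real.toNNReal L) (gradient f) := by
      apply LipschitzWith.of_dist_le_mul
      intro x y
      rw [dist_eq_norm, dist_eq_norm]
      calc ‖gradient f x - gradient f y‖ ≤ L * ‖x - y‖ := hsmooth x y
        _ = (Real.toNNReal L : ℝ) * ‖x - y‖ := by rw [Real.coe_toNNReal _ hL.le]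
    exact this.continuous
  -- a jointly measurable a.e.-modification machinery for `G`
  obtain ⟨D, hD⟩ := TopologicalSpace.exists_dense_seq (EuclideanSpace ℝ (Fin d))
  have hgm0 : ∀ m : ℕ, ∃ gm : Bt → EuclideanSpace ℝ (Fin d),
      StronglyMeasurable gm ∧ ∀ᵐ b ∂μB, G (D m) b = gm b := fun m =>
    ⟨(hGint (D m)).1.mk _, (hGint (D m)).1.stronglyMeasurable_mk, (hGint (D m)).1.ae_eq_mk⟩
  choose gm hgmM hgmE using hgm0
  have hNS0 : ∀ m : ℕ, ∃ S : Set Bt, {b | ¬ G (D m) b = gm m b} ⊆ S ∧ MeasurableSet S ∧ μB S = 0 :=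
    fun m => exists_measurable_superset_of_null (hgmE m)
  choose NS hNSsub hNSm hNS00 using hNS0
  set NN : Set Bt := ⋃ m, NS m with hNNdef
  have hNNm : MeasurableSet NN := MeasurableSet.iUnion hNSm
  have hNN0 : μB NN = 0 := measure_iUnion_null hNS00
  have hgood : ∀ b, b ∉ NN → ∀ m, G (D m) b = gm m b := by
    intro b hb m
    by_contra hne
    exact hb (Set.mem_iUnion.2 ⟨m, hNSsub m hne⟩)
  have hsel : ∀ (x : EuclideanSpace ℝ (Fin d)) (k : ℕ), ∃ m, dist x (D m) < 1 / ((k : ℝ) + 1) :=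
    fun x k => hD.exists_dist_lt x (by positivity)
  set r : ℕ → EuclideanSpace ℝ (Fin d) → ℕ := fun k x => Nat.find (hsel x k) with hrdef
  have hrd : ∀ k x, dist x (D (r k x)) < 1 / ((k : ℝ) + 1) := fun k x => Nat.find_spec (hsel x k)
  have hrm : ∀ k, Measurable (r k) := by
    intro k
    apply measurable_to_countable'
    intro m
    have hset : r k ⁻¹' {m} = {x | dist x (D m) < 1 / ((k : ℝ) + 1)} ∩
        ⋂ (j : ℕ) (_ : j < m), {x | ¬ dist x (D j) < 1 / ((k : ℝ) + 1)} := by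
      ext x
      simp only [Set.mem_preimage, Set.mem_singleton_iff, hrdef, Nat.find_eq_iff,
        Set.mem_inter_iff, Set.mem_setOf_eq, Set.mem_iInter]
    have hopen : ∀ c : EuclideanSpace ℝ (Fin d),
        MeasurableSet {x | dist x c < 1 / ((k : ℝ) + 1)} :=
      fun c => (isOpen_lt (continuous_id.dist continuous_const) continuous_const).measurableSet
    rw [hset]
    exact (hopen _).inter (MeasurableSet.iInter fun j =>
      MeasurableSet.iInter fun _ => (hopen _).compl)
  -- coordinates avoid the bad set almost surely
  have hcoord : ∀ i : Fin (n + 1), ∀ᵐ ω ∂μ, ω i ∉ NN := by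
    intro i
    have hset : ((fun ω : Fin (n + 1) → Bt => ω i) ⁻¹' NN)
        = Set.univ.pi (fun j => if j = i then NN else Set.univ) := by
      ext ω
      simp only [Set.mem_preimage, Set.mem_pi, Set.mem_univ, true_implies]
      constructor
      · intro hωi j
        by_cases hj : j = i
        · subst hj; simp [hωi]
        · simp [hj]
      · intro hall
        have := hall i
        simpa using this
    have hnull : μ ((fun ω : Fin (n + 1) → Bt => ω i) ⁻¹' NN) = 0 := by
      rw [hset, hμdef, Measure.pi_pi]
      exact Finset.prod_eq_zero (Finset.mem_univ i) (by simp [hNN0])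
    rw [ae_iff]
    have : {ω : Fin (n + 1) → Bt | ¬ ω i ∉ NN} = (fun ω : Fin (n + 1) → Bt => ω i) ⁻¹' NN := by
      ext ω; simp
    rw [this]
    exact hnull
  -- composition with `G` preserves a.e.-measurability
  have hGmeas : ∀ u : (Fin (n + 1) → Bt) → EuclideanSpace ℝ (Fin d), AEMeasurable u μ →
      ∀ i : Fin (n + 1), AEMeasurable (fun ω => G (u ω) (ω i)) μ := by
    intro u hu i
    apply aemeasurable_of_tendsto_metrizable_ae
      (f := fun k ω => gm (r k (hu.mk u ω)) (ω i)) atTop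
    · intro k
      have h1 : Measurable fun ω : Fin (n + 1) → Bt => (ω i, r k (hu.mk u ω)) :=
        (measurable_pi_apply i).prodMk ((hrm k).comp hu.measurable_mk)
      have h2 : Measurable fun p : Bt × ℕ => gm p.2 p.1 :=
        measurable_from_prod_countable_left fun m => (hgmM m).measurable
      exact (h2.comp h1).aemeasurable
    · filter_upwards [hu.ae_eq_mk, hcoord i] with ω hωe hωN
      have heq : ∀ k, gm (r k (hu.mk u ω)) (ω i) = G (D (r k (hu.mk u ω))) (ω i) :=
        fun k => (hgood _ hωN _).symm
      have hmain : Tendsto (fun k => G (D (r k (hu.mk u ω))) (ω i)) atTop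
          (nhds (G (hu.mk u ω) (ω i))) := by
        apply tendsto_iff_dist_tendsto_zero.2
        apply squeeze_zero (fun k => dist_nonneg)
          (g := fun k : ℕ => L * (1 / ((k : ℝ) + 1)))
        · intro k
          have hlip := hGlip (ω i) (D (r k (hu.mk u ω))) (hu.mk u ω)
          have hd := hrd k (hu.mk u ω)
          rw [dist_eq_norm]
          calc ‖G (D (r k (hu.mk u ω))) (ω i) - G (hu.mk u ω) (ω i)‖
              ≤ L * ‖D (r k (hu.mk u ω)) - hu.mk u ω‖ := hlip
            _ ≤ L * (1 / ((k : ℝ) + 1)) := by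
                apply mul_le_mul_of_nonneg_left _ hL.le
                rw [← dist_eq_norm, dist_comm]
                exact hd.le
        · simpa using tendsto_one_div_add_atTop_nhds_zero_nat.const_mul L
      rw [hωe]
      exact (Filter.Tendsto.congr (fun k => (heq k).symm)) hmain
  -- a.e. measurability of `w` and `v`
  have hMwv : ∀ τ, τ ≤ n → AEMeasurable (w τ) μ ∧ AEMeasurable (v τ) μ := by
    intro τ
    induction τ with
    | zero =>
        intro _
        constructor
        · have : w 0 = fun _ => wk := funext hw0
          rw [this]; exact aemeasurable_const
        · have : v 0 = fun _ => gradient f wk := funext hv0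
          rw [this]; exact aemeasurable_const
    | succ t ih =>
        intro h
        obtain ⟨ihw, ihv⟩ := ih (by omega)
        have hwsucc : AEMeasurable (w (t + 1)) μ := by
          have : w (t + 1) = fun ω => w t ω - η • v t ω := funext (hw t (by omega))
          rw [this]
          exact ihw.sub (ihv.const_smul η)
        refine ⟨hwsucc, ?_⟩
        have hveq : v (t + 1) = fun ω =>
            G (w (t + 1) ω) (ω ⟨t + 1, by omega⟩) + v t ω - G (w t ω) (ω ⟨t + 1, by omega⟩) := by
          funext ω
          rw [hv (t + 1) (by omega) (by omega) ω]
          simp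
        rw [hveq]
        exact ((hGmeas _ hwsucc _).add ihv).sub (hGmeas _ ihw _)
  haveI hμprob : IsProbabilityMeasure μ := by rw [hμdef]; exact Measure.pi.instIsProbabilityMeasure _
  haveI hBtne : Nonempty Bt := by
    by_contra h
    rw [not_nonempty_iff] at h
    have h1 : μB Set.univ = 1 := measure_univ
    rw [Set.univ_eq_empty_iff.mpr h] at h1
    simp at h1
  -- the cross term vanishes
  have hcross : ∀ t, t < n → ∀ i : Fin (n + 1), (i : ℕ) = t + 1 →
      ∫ ω, (inner ℝ (v t ω - gradient f (w t ω))
        ((G (w (t + 1) ω) (ω i) - G (w t ω) (ω i)) -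
          (gradient f (w (t + 1) ω) - gradient f (w t ω))) : ℝ) ∂μ = 0 := by
    intro t ht i hi
    set T := MeasurableEquiv.piFinSuccAbove (fun _ : Fin (n + 1) => Bt) i with hTdef
    set ν : Measure (Fin n → Bt) := Measure.pi fun _ : Fin n => μB with hνdef
    haveI hνprob : IsProbabilityMeasure ν := by
      rw [hνdef]; exact Measure.pi.instIsProbabilityMeasure _
    have hmp : MeasurePreserving (⇑T) μ (μB.prod ν) :=
      measurePreserving_piFinSuccAbove (fun _ : Fin (n + 1) => μB) i
    -- measurability of the integrand
    obtain ⟨hw_t, hv_t⟩ := hMwv t (by omega)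
    have hw_t1 : AEMeasurable (w (t + 1)) μ := (hMwv (t + 1) (by omega)).1
    have he0 : AEMeasurable (fun ω => v t ω - gradient f (w t ω)) μ :=
      hv_t.sub (hgradcont.measurable.comp_aemeasurable hw_t)
    have hq : AEMeasurable (fun ω => (G (w (t + 1) ω) (ω i) - G (w t ω) (ω i)) -
        (gradient f (w (t + 1) ω) - gradient f (w t ω))) μ :=
      ((hGmeas _ hw_t1 i).sub (hGmeas _ hw_t i)).sub
        ((hgradcont.measurable.comp_aemeasurable hw_t1).sub
          (hgradcont.measurable.comp_aemeasurable hw_t))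
    have hF : AEMeasurable (fun ω => (inner ℝ (v t ω - gradient f (w t ω))
        ((G (w (t + 1) ω) (ω i) - G (w t ω) (ω i)) -
          (gradient f (w (t + 1) ω) - gradient f (w t ω))) : ℝ)) μ :=
      (continuous_inner (𝕜 := ℝ)).measurable.comp_aemeasurable (he0.prodMk hq)
    -- uniform bound on the integrand
    have hE0b : ∀ ω, ‖v t ω - gradient f (w t ω)‖ ≤ 2 * a * ((n : ℝ) * (3 * g)) := by
      intro ω
      have h1 := hE2 t (by omega) ω
      have hsum : ∑ s ∈ Finset.range t, ‖v s ω‖ ≤ (t : ℝ) * (3 * g) := by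
        calc ∑ s ∈ Finset.range t, ‖v s ω‖ ≤ ∑ _s ∈ Finset.range t, 3 * g :=
              Finset.sum_le_sum fun s hs => hvK s
                (by have := Finset.mem_range.mp hs; omega) ω
          _ = (t : ℝ) * (3 * g) := by
              rw [Finset.sum_const, Finset.card_range, nsmul_eq_mul]
      have htn : (t : ℝ) ≤ (n : ℝ) := by exact_mod_cast (by omega : t ≤ n)
      nlinarith [mul_le_mul_of_nonneg_left hsum (by linarith : (0:ℝ) ≤ 2 * a),
        mul_le_mul_of_nonneg_left (mul_le_mul_of_nonneg_right htn
          (by linarith : (0:ℝ) ≤ 3 * g)) (by linarith : (0:ℝ) ≤ 2 * a)]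
    have hFb : ∀ ω, |(inner ℝ (v t ω - gradient f (w t ω))
        ((G (w (t + 1) ω) (ω i) - G (w t ω) (ω i)) -
          (gradient f (w (t + 1) ω) - gradient f (w t ω))) : ℝ)|
        ≤ (2 * a * ((n : ℝ) * (3 * g))) * (6 * a * g) := by
      intro ω
      have h1 := abs_real_inner_le_norm (v t ω - gradient f (w t ω))
        ((G (w (t + 1) ω) (ω i) - G (w t ω) (ω i)) -
          (gradient f (w (t + 1) ω) - gradient f (w t ω)))
      have h2 := hE0b ω
      have h3 := hinc t (by omega) ω (ω i)
      have h4 := norm_nonneg (v t ω - gradient f (w t ω))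
      have h5 := norm_nonneg ((G (w (t + 1) ω) (ω i) - G (w t ω) (ω i)) -
        (gradient f (w (t + 1) ω) - gradient f (w t ω)))
      calc |(inner ℝ (v t ω - gradient f (w t ω))
            ((G (w (t + 1) ω) (ω i) - G (w t ω) (ω i)) -
              (gradient f (w (t + 1) ω) - gradient f (w t ω))) : ℝ)|
          ≤ ‖v t ω - gradient f (w t ω)‖ *
            ‖(G (w (t + 1) ω) (ω i) - G (w t ω) (ω i)) -
              (gradient f (w (t + 1) ω) - gradient f (w t ω))‖ := h1
        _ ≤ (2 * a * ((n : ℝ) * (3 * g))) * (6 * a * g) := by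
            apply mul_le_mul h2 h3 h5
            positivity
    -- integrability on the product space
    have hcomp : AEStronglyMeasurable ((fun ω => (inner ℝ (v t ω - gradient f (w t ω))
        ((G (w (t + 1) ω) (ω i) - G (w t ω) (ω i)) -
          (gradient f (w (t + 1) ω) - gradient f (w t ω))) : ℝ)) ∘ ⇑T.symm) (μB.prod ν) :=
      hF.aestronglyMeasurable.comp_quasiMeasurePreserving
        ((hmp.symm T).quasiMeasurePreserving)
    have hintb : Integrable ((fun ω => (inner ℝ (v t ω - gradient f (w t ω))
        ((G (w (t + 1) ω) (ω i) - G (w t ω) (ω i)) -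
          (gradient f (w (t + 1) ω) - gradient f (w t ω))) : ℝ)) ∘ ⇑T.symm) (μB.prod ν) := by
      apply Integrable.mono' (integrable_const ((2 * a * ((n : ℝ) * (3 * g))) * (6 * a * g)))
        hcomp
      exact Filter.Eventually.of_forall fun p => by
        simpa [Real.norm_eq_abs] using hFb (T.symm p)
    -- the inner integral vanishes for every fixed rest of the coordinates
    have hinner : ∀ y : Fin n → Bt,
        ∫ b, ((fun ω => (inner ℝ (v t ω - gradient f (w t ω))
          ((G (w (t + 1) ω) (ω i) - G (w t ω) (ω i)) -
            (gradient f (w (t + 1) ω) - gradient f (w t ω))) : ℝ)) ∘ ⇑T.symm) (b, y) ∂μB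
          = 0 := by
      intro y
      have hb0 : ∃ b0 : Bt, True := ⟨Classical.arbitrary Bt, trivial⟩
      obtain ⟨b0, -⟩ := hb0
      have hdepwv : ∀ b : Bt, w t (i.insertNth b y) = w t (i.insertNth b0 y) ∧
          v t (i.insertNth b y) = v t (i.insertNth b0 y) := by
        intro b
        apply hdep t (by omega)
        intro j hj
        have hji : j ≠ i := by
          intro hcon
          rw [hcon] at hj
          omega
        obtain ⟨m, hm⟩ := Fin.exists_succAbove_eq hji
        rw [← hm, Fin.insertNth_apply_succAbove, Fin.insertNth_apply_succAbove]
      have hdepw1 : ∀ b : Bt, w (t + 1) (i.insertNth b y) = w (t + 1) (i.insertNth b0 y) := by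
        intro b
        rw [hw t (by omega) _, hw t (by omega) _, (hdepwv b).1, (hdepwv b).2]
      have hTs : ∀ b : Bt, T.symm (b, y) = i.insertNth b y := fun b => rfl
      have hFr : ∀ b : Bt, ((fun ω => (inner ℝ (v t ω - gradient f (w t ω))
          ((G (w (t + 1) ω) (ω i) - G (w t ω) (ω i)) -
            (gradient f (w (t + 1) ω) - gradient f (w t ω))) : ℝ)) ∘ ⇑T.symm) (b, y)
          = (inner ℝ (v t (i.insertNth b0 y) - gradient f (w t (i.insertNth b0 y)))
            ((G (w (t + 1) (i.insertNth b0 y)) b - G (w t (i.insertNth b0 y)) b) -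
              (gradient f (w (t + 1) (i.insertNth b0 y)) -
                gradient f (w t (i.insertNth b0 y)))) : ℝ) := by
        intro b
        show (inner ℝ (v t (T.symm (b, y)) - gradient f (w t (T.symm (b, y)))) _ : ℝ) = _
        rw [hTs b, (hdepwv b).1, (hdepwv b).2, hdepw1 b, Fin.insertNth_apply_same]
      rw [integral_congr_ae (Filter.Eventually.of_forall hFr)]
      have hintA : Integrable (fun b =>
          G (w (t + 1) (i.insertNth b0 y)) b - G (w t (i.insertNth b0 y)) b) μB :=
        (hGint _).sub (hGint _)
      have hint2 : Integrable (fun b =>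
          (G (w (t + 1) (i.insertNth b0 y)) b - G (w t (i.insertNth b0 y)) b) -
            (gradient f (w (t + 1) (i.insertNth b0 y)) -
              gradient f (w t (i.insertNth b0 y)))) μB :=
        hintA.sub (integrable_const _)
      rw [integral_inner hint2]
      rw [integral_sub hintA (integrable_const _),
        integral_sub (hGint _) (hGint _), hGunb, hGunb, integral_const]
      simp
    calc ∫ ω, (inner ℝ (v t ω - gradient f (w t ω))
          ((G (w (t + 1) ω) (ω i) - G (w t ω) (ω i)) -
            (gradient f (w (t + 1) ω) - gradient f (w t ω))) : ℝ) ∂μ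
        = ∫ p, ((fun ω => (inner ℝ (v t ω - gradient f (w t ω))
            ((G (w (t + 1) ω) (ω i) - G (w t ω) (ω i)) -
              (gradient f (w (t + 1) ω) - gradient f (w t ω))) : ℝ)) ∘ ⇑T.symm) p
            ∂(μB.prod ν) := ((hmp.symm T).integral_comp' _).symm
      _ = ∫ y, ∫ b, ((fun ω => (inner ℝ (v t ω - gradient f (w t ω))
            ((G (w (t + 1) ω) (ω i) - G (w t ω) (ω i)) -
              (gradient f (w (t + 1) ω) - gradient f (w t ω))) : ℝ)) ∘ ⇑T.symm) (b, y)
            ∂μB ∂ν := integral_prod_symm _ hintb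
      _ = 0 := by simp only [hinner, integral_zero]
  -- integrability of the error/increment integrands, and the one-step inequality
  have key : ∀ t, t < n →
      ∫ ω, ‖v (t + 1) ω - gradient f (w (t + 1) ω)‖ ^ 2 ∂μ
        ≤ ∫ ω, ‖v t ω - gradient f (w t ω)‖ ^ 2 ∂μ + 36 * a ^ 2 * g ^ 2 := by
    intro t ht
    have ht1 : t + 1 < n + 1 := by omega
    obtain ⟨hw_t, hv_t⟩ := hMwv t (by omega)
    have hw_t1 : AEMeasurable (w (t + 1)) μ := (hMwv (t + 1) (by omega)).1
    have he0 : AEMeasurable (fun ω => v t ω - gradient f (w t ω)) μ :=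
      hv_t.sub (hgradcont.measurable.comp_aemeasurable hw_t)
    have hq : AEMeasurable (fun ω => (G (w (t + 1) ω) (ω ⟨t + 1, ht1⟩) -
        G (w t ω) (ω ⟨t + 1, ht1⟩)) -
        (gradient f (w (t + 1) ω) - gradient f (w t ω))) μ :=
      ((hGmeas _ hw_t1 _).sub (hGmeas _ hw_t _)).sub
        ((hgradcont.measurable.comp_aemeasurable hw_t1).sub
          (hgradcont.measurable.comp_aemeasurable hw_t))
    have hE0b : ∀ ω, ‖v t ω - gradient f (w t ω)‖ ≤ 2 * a * ((n : ℝ) * (3 * g)) := by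
      intro ω
      have h1 := hE2 t (by omega) ω
      have hsum : ∑ s ∈ Finset.range t, ‖v s ω‖ ≤ (t : ℝ) * (3 * g) := by
        calc ∑ s ∈ Finset.range t, ‖v s ω‖ ≤ ∑ _s ∈ Finset.range t, 3 * g :=
              Finset.sum_le_sum fun s hs => hvK s
                (by have := Finset.mem_range.mp hs; omega) ω
          _ = (t : ℝ) * (3 * g) := by
              rw [Finset.sum_const, Finset.card_range, nsmul_eq_mul]
      have htn : (t : ℝ) ≤ (n : ℝ) := by exact_mod_cast (by omega : t ≤ n)
      nlinarith [mul_le_mul_of_nonneg_left hsum (by linarith : (0:ℝ) ≤ 2 * a),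
        mul_le_mul_of_nonneg_left (mul_le_mul_of_nonneg_right htn
          (by linarith : (0:ℝ) ≤ 3 * g)) (by linarith : (0:ℝ) ≤ 2 * a)]
    have hqb : ∀ ω, ‖(G (w (t + 1) ω) (ω ⟨t + 1, ht1⟩) - G (w t ω) (ω ⟨t + 1, ht1⟩)) -
        (gradient f (w (t + 1) ω) - gradient f (w t ω))‖ ≤ 6 * a * g :=
      fun ω => hinc t (by omega) ω (ω ⟨t + 1, ht1⟩)
    -- integrability of the three pieces
    have I0 : Integrable (fun ω => ‖v t ω - gradient f (w t ω)‖ ^ 2) μ := by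
      apply Integrable.mono' (integrable_const ((2 * a * ((n : ℝ) * (3 * g))) ^ 2))
        (he0.norm.pow_const 2).aestronglyMeasurable
      apply Filter.Eventually.of_forall
      intro ω
      have h1 := hE0b ω
      have h2 := norm_nonneg (v t ω - gradient f (w t ω))
      rw [Real.norm_eq_abs, abs_of_nonneg (by positivity)]
      nlinarith
    have Iq : Integrable (fun ω => ‖(G (w (t + 1) ω) (ω ⟨t + 1, ht1⟩) -
        G (w t ω) (ω ⟨t + 1, ht1⟩)) -
        (gradient f (w (t + 1) ω) - gradient f (w t ω))‖ ^ 2) μ := by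
      apply Integrable.mono' (integrable_const ((6 * a * g) ^ 2))
        (hq.norm.pow_const 2).aestronglyMeasurable
      apply Filter.Eventually.of_forall
      intro ω
      have h1 := hqb ω
      have h2 := norm_nonneg ((G (w (t + 1) ω) (ω ⟨t + 1, ht1⟩) -
        G (w t ω) (ω ⟨t + 1, ht1⟩)) -
        (gradient f (w (t + 1) ω) - gradient f (w t ω)))
      rw [Real.norm_eq_abs, abs_of_nonneg (by positivity)]
      nlinarith
    have Icr : Integrable (fun ω => 2 * (inner ℝ (v t ω - gradient f (w t ω))
        ((G (w (t + 1) ω) (ω ⟨t + 1, ht1⟩) - G (w t ω) (ω ⟨t + 1, ht1⟩)) -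
          (gradient f (w (t + 1) ω) - gradient f (w t ω))) : ℝ)) μ := by
      have hFm : AEMeasurable (fun ω => (inner ℝ (v t ω - gradient f (w t ω))
          ((G (w (t + 1) ω) (ω ⟨t + 1, ht1⟩) - G (w t ω) (ω ⟨t + 1, ht1⟩)) -
            (gradient f (w (t + 1) ω) - gradient f (w t ω))) : ℝ)) μ :=
        (continuous_inner (𝕜 := ℝ)).measurable.comp_aemeasurable (he0.prodMk hq)
      apply Integrable.mono'
        (integrable_const (2 * ((2 * a * ((n : ℝ) * (3 * g))) * (6 * a * g))))
        (hFm.const_mul 2).aestronglyMeasurable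
      apply Filter.Eventually.of_forall
      intro ω
      have h1 := abs_real_inner_le_norm (v t ω - gradient f (w t ω))
        ((G (w (t + 1) ω) (ω ⟨t + 1, ht1⟩) - G (w t ω) (ω ⟨t + 1, ht1⟩)) -
          (gradient f (w (t + 1) ω) - gradient f (w t ω)))
      have h2 := hE0b ω
      have h3 := hqb ω
      have h4 := norm_nonneg (v t ω - gradient f (w t ω))
      have h5 := norm_nonneg ((G (w (t + 1) ω) (ω ⟨t + 1, ht1⟩) -
        G (w t ω) (ω ⟨t + 1, ht1⟩)) -
        (gradient f (w (t + 1) ω) - gradient f (w t ω)))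
      rw [Real.norm_eq_abs, abs_mul, abs_two]
      have h6 : ‖v t ω - gradient f (w t ω)‖ *
          ‖(G (w (t + 1) ω) (ω ⟨t + 1, ht1⟩) - G (w t ω) (ω ⟨t + 1, ht1⟩)) -
            (gradient f (w (t + 1) ω) - gradient f (w t ω))‖
          ≤ (2 * a * ((n : ℝ) * (3 * g))) * (6 * a * g) := by
        apply mul_le_mul h2 h3 h5
        positivity
      linarith
    -- expansion of the squared norm
    have hptw : ∀ ω, ‖v (t + 1) ω - gradient f (w (t + 1) ω)‖ ^ 2
        = ‖v t ω - gradient f (w t ω)‖ ^ 2 +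
          2 * (inner ℝ (v t ω - gradient f (w t ω))
            ((G (w (t + 1) ω) (ω ⟨t + 1, ht1⟩) - G (w t ω) (ω ⟨t + 1, ht1⟩)) -
              (gradient f (w (t + 1) ω) - gradient f (w t ω))) : ℝ) +
          ‖(G (w (t + 1) ω) (ω ⟨t + 1, ht1⟩) - G (w t ω) (ω ⟨t + 1, ht1⟩)) -
            (gradient f (w (t + 1) ω) - gradient f (w t ω))‖ ^ 2 := by
      intro ω
      have hsplit : v (t + 1) ω - gradient f (w (t + 1) ω)
          = (v t ω - gradient f (w t ω)) +
            ((G (w (t + 1) ω) (ω ⟨t + 1, ht1⟩) - G (w t ω) (ω ⟨t + 1, ht1⟩)) -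
              (gradient f (w (t + 1) ω) - gradient f (w t ω))) := by
        rw [hv (t + 1) (by omega) ht1 ω]
        simp only [Nat.add_sub_cancel]
        abel
      rw [hsplit, norm_add_sq_real]
    have hIqb : ∫ ω, ‖(G (w (t + 1) ω) (ω ⟨t + 1, ht1⟩) - G (w t ω) (ω ⟨t + 1, ht1⟩)) -
        (gradient f (w (t + 1) ω) - gradient f (w t ω))‖ ^ 2 ∂μ ≤ 36 * a ^ 2 * g ^ 2 := by
      have hmono := integral_mono_of_nonneg
        (f := fun ω => ‖(G (w (t + 1) ω) (ω ⟨t + 1, ht1⟩) - G (w t ω) (ω ⟨t + 1, ht1⟩)) -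
          (gradient f (w (t + 1) ω) - gradient f (w t ω))‖ ^ 2)
        (g := fun _ => 36 * a ^ 2 * g ^ 2) (μ := μ)
        (Filter.Eventually.of_forall fun ω => by dsimp only; positivity)
        (integrable_const _)
        (Filter.Eventually.of_forall fun ω => by
          dsimp only
          have h1 := hqb ω
          have h2 := norm_nonneg ((G (w (t + 1) ω) (ω ⟨t + 1, ht1⟩) -
            G (w t ω) (ω ⟨t + 1, ht1⟩)) -
            (gradient f (w (t + 1) ω) - gradient f (w t ω)))
          nlinarith)
      calc ∫ ω, ‖(G (w (t + 1) ω) (ω ⟨t + 1, ht1⟩) - G (w t ω) (ω ⟨t + 1, ht1⟩)) -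
            (gradient f (w (t + 1) ω) - gradient f (w t ω))‖ ^ 2 ∂μ
          ≤ ∫ _ω, (36 * a ^ 2 * g ^ 2 : ℝ) ∂μ := hmono
        _ = 36 * a ^ 2 * g ^ 2 := by simp
    have hcr0 : ∫ ω, 2 * (inner ℝ (v t ω - gradient f (w t ω))
        ((G (w (t + 1) ω) (ω ⟨t + 1, ht1⟩) - G (w t ω) (ω ⟨t + 1, ht1⟩)) -
          (gradient f (w (t + 1) ω) - gradient f (w t ω))) : ℝ) ∂μ = 0 := by
      rw [integral_const_mul]
      rw [hcross t ht ⟨t + 1, ht1⟩ rfl]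
      ring
    calc ∫ ω, ‖v (t + 1) ω - gradient f (w (t + 1) ω)‖ ^ 2 ∂μ
        = ∫ ω, (‖v t ω - gradient f (w t ω)‖ ^ 2 +
            2 * (inner ℝ (v t ω - gradient f (w t ω))
              ((G (w (t + 1) ω) (ω ⟨t + 1, ht1⟩) - G (w t ω) (ω ⟨t + 1, ht1⟩)) -
                (gradient f (w (t + 1) ω) - gradient f (w t ω))) : ℝ) +
            ‖(G (w (t + 1) ω) (ω ⟨t + 1, ht1⟩) - G (w t ω) (ω ⟨t + 1, ht1⟩)) -
              (gradient f (w (t + 1) ω) - gradient f (w t ω))‖ ^ 2) ∂μ :=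
          integral_congr_ae (Filter.Eventually.of_forall hptw)
      _ = (∫ ω, ‖v t ω - gradient f (w t ω)‖ ^ 2 ∂μ +
            ∫ ω, 2 * (inner ℝ (v t ω - gradient f (w t ω))
              ((G (w (t + 1) ω) (ω ⟨t + 1, ht1⟩) - G (w t ω) (ω ⟨t + 1, ht1⟩)) -
                (gradient f (w (t + 1) ω) - gradient f (w t ω))) : ℝ) ∂μ) +
            ∫ ω, ‖(G (w (t + 1) ω) (ω ⟨t + 1, ht1⟩) - G (w t ω) (ω ⟨t + 1, ht1⟩)) -
              (gradient f (w (t + 1) ω) - gradient f (w t ω))‖ ^ 2 ∂μ := by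
          have IA : Integrable (fun ω => ‖v t ω - gradient f (w t ω)‖ ^ 2 +
              2 * (inner ℝ (v t ω - gradient f (w t ω))
                ((G (w (t + 1) ω) (ω ⟨t + 1, ht1⟩) - G (w t ω) (ω ⟨t + 1, ht1⟩)) -
                  (gradient f (w (t + 1) ω) - gradient f (w t ω))) : ℝ)) μ := I0.add Icr
          rw [integral_add IA Iq, integral_add I0 Icr]
      _ ≤ ∫ ω, ‖v t ω - gradient f (w t ω)‖ ^ 2 ∂μ + 36 * a ^ 2 * g ^ 2 := by
          rw [hcr0]
          simp only [add_zero]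
          linarith [hIqb]
  -- accumulate the one-step inequality
  have hacc : ∀ t, t ≤ n → ∫ ω, ‖v t ω - gradient f (w t ω)‖ ^ 2 ∂μ
      ≤ 36 * a ^ 2 * g ^ 2 * t := by
    intro t
    induction t with
    | zero =>
        intro _
        have hz : ∀ ω : Fin (n + 1) → Bt, ‖v 0 ω - gradient f (w 0 ω)‖ ^ 2 = 0 := by
          intro ω
          rw [hv0, hw0]
          simp
        simp [hz]
    | succ t ih =>
        intro h
        have h1 := key t (by omega)
        have h2 := ih (by omega)
        push_cast
        push_cast at h2
        linarith
  -- conclusion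
  have hgauss : (∑ τ ∈ Finset.range (n + 1), (τ : ℝ)) * 2 = ((n : ℝ) + 1) * n := by
    have h : (∑ i ∈ Finset.range (n + 1), i) * 2 = (n + 1) * n := by
      simpa using Finset.sum_range_id_mul_two (n + 1)
    calc (∑ τ ∈ Finset.range (n + 1), (τ : ℝ)) * 2
        = (((∑ i ∈ Finset.range (n + 1), i) * 2 : ℕ) : ℝ) := by push_cast; ring
      _ = ((n : ℝ) + 1) * n := by rw [h]; push_cast; ring
  calc ∑ τ ∈ Finset.range (n + 1), ∫ ω, ‖v τ ω - gradient f (w τ ω)‖ ^ 2 ∂μ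
      ≤ ∑ τ ∈ Finset.range (n + 1), 36 * a ^ 2 * g ^ 2 * τ :=
        Finset.sum_le_sum fun τ hτ => hacc τ (by have := Finset.mem_range.mp hτ; omega)
    _ = 36 * a ^ 2 * g ^ 2 * ∑ τ ∈ Finset.range (n + 1), (τ : ℝ) := by
        rw [Finset.mul_sum]
    _ ≤ 32 * ((n : ℝ) + 1) ^ 2 * a ^ 2 * g ^ 2 := by
        have hS : ∑ τ ∈ Finset.range (n + 1), (τ : ℝ) = ((n : ℝ) + 1) * n / 2 := by
          linarith [hgauss]
        rw [hS]
        have hfac : ((n : ℝ) + 1) * n ≤ ((n : ℝ) + 1) ^ 2 := by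
          nlinarith [Nat.cast_nonneg (α := ℝ) n]
        have hA : (0 : ℝ) ≤ a ^ 2 * g ^ 2 := by positivity
        nlinarith [mul_le_mul_of_nonneg_left hfac hA,
          mul_nonneg hA (sq_nonneg ((n : ℝ) + 1))]
    _ = 32 * ((n + 1 : ℕ) : ℝ) ^ 2 * η ^ 2 * L ^ 2 * g ^ 2 := by
        rw [hadef]; push_cast; ring
end

section
/- Consider a client i with L-smooth objective f_i and L-Lipschitz stochastic gradient maps, and two coupled local-momentum sequences of E steps from starting points w_k and w_{k−1} built with the SAME batches at each local step. If 2ηLE² ≤ 1, then the round-level displacements satisfy the Lipschitz-type bound ‖(w_k − w_{k,E}^{(i)}) − (w_{k−1} − ŵ_{k−1,E}^{(i)})‖ ≤ 2e·ηLE(E+1)·‖w_k − w_{k−1}‖, where e is Euler's number. -/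
open MeasureTheory Finset

set_option maxHeartbeats 1000000 in
/-- Lemma "nov-1-lem3", first part.
Client `i` has an `L`-smooth objective `f` and `L`-Lipschitz stochastic-gradient maps
`G τ = ∇̃f_i(·; B_{k,τ}^{(i)})` (the batches are fixed, so this is deterministic).
Two coupled local-momentum sequences of `E` steps are run from the starting points
`wk = w_k` and `wk1 = w_{k−1}`, using the SAME batch at each local step.
If `2ηLE² ≤ 1`, then
`‖(w_k − w_{k,E}) − (w_{k−1} − ŵ_{k−1,E})‖ ≤ 2e·ηLE(E+1)·‖w_k − w_{k−1}‖`. -/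
theorem stmt11
    {d : ℕ} (L η : ℝ) (hL : 0 < L) (hη : 0 < η) (E : ℕ) (hE : 1 ≤ E)
    (f : EuclideanSpace ℝ (Fin d) → ℝ)
    (hdiff : Differentiable ℝ f)
    (hsmooth : ∀ x y, ‖gradient f x - gradient f y‖ ≤ L * ‖x - y‖)
    (G : ℕ → EuclideanSpace ℝ (Fin d) → EuclideanSpace ℝ (Fin d))
    (hGlip : ∀ τ x y, ‖G τ x - G τ y‖ ≤ L * ‖x - y‖)
    (wk wk1 : EuclideanSpace ℝ (Fin d))
    (w wh v vh : ℕ → EuclideanSpace ℝ (Fin d))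
    (hw0 : w 0 = wk) (hwh0 : wh 0 = wk1)
    (hv0 : v 0 = gradient f wk) (hvh0 : vh 0 = gradient f wk1)
    (hv : ∀ τ, 1 ≤ τ → τ ≤ E - 1 → v τ = G τ (w τ) + v (τ - 1) - G τ (w (τ - 1)))
    (hvh : ∀ τ, 1 ≤ τ → τ ≤ E - 1 → vh τ = G τ (wh τ) + vh (τ - 1) - G τ (wh (τ - 1)))
    (hw : ∀ τ, τ ≤ E - 1 → w (τ + 1) = w τ - η • v τ)
    (hwh : ∀ τ, τ ≤ E - 1 → wh (τ + 1) = wh τ - η • vh τ)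
    (hstep : 2 * η * L * (E : ℝ) ^ 2 ≤ 1) :
    ‖(wk - w E) - (wk1 - wh E)‖
      ≤ 2 * Real.exp 1 * (η * L * E * ((E : ℝ) + 1)) * ‖wk - wk1‖ := by
  have hEpos : (0:ℝ) < (E:ℝ) := by exact_mod_cast hE
  have hD : 0 ≤ ‖wk - wk1‖ := norm_nonneg _
  obtain ⟨q, hqdef⟩ : ∃ q : ℝ, q = 1 + 1/(E:ℝ) := ⟨_, rfl⟩
  have hq1 : (1:ℝ) ≤ q := by
    have : 0 < 1/(E:ℝ) := by positivity
    linarith [hqdef.le]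
  have hqpos : (0:ℝ) < q := lt_of_lt_of_le one_pos hq1
  have hqe : ∀ τ : ℕ, τ ≤ E → q ^ τ ≤ Real.exp 1 := by
    intro τ hτ
    have h1 : q ≤ Real.exp (1/(E:ℝ)) := by
      have := Real.add_one_le_exp (1/(E:ℝ)); linarith [hqdef.le]
    calc q ^ τ ≤ (Real.exp (1/(E:ℝ))) ^ τ := pow_le_pow_left₀ hqpos.le h1 τ
      _ = Real.exp (τ * (1/(E:ℝ))) := by rw [← Real.exp_nat_mul]
      _ ≤ Real.exp 1 := by
          apply Real.exp_le_exp.mpr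
          rw [mul_one_div]
          apply div_le_one_of_le₀ _ hEpos.le
          exact_mod_cast hτ
  have h2ηLE : 2*η*L*(E:ℝ) ≤ 1/(E:ℝ) := by
    rw [le_div_iff₀ hEpos]
    nlinarith
  -- one-step recursions
  have harec : ∀ τ, τ ≤ E - 1 →
      ‖w (τ+1) - wh (τ+1)‖ ≤ ‖w τ - wh τ‖ + η * ‖v τ - vh τ‖ := by
    intro τ hτ
    rw [hw τ hτ, hwh τ hτ]
    have heq : w τ - η • v τ - (wh τ - η • vh τ)
        = (w τ - wh τ) - η • (v τ - vh τ) := by rw [smul_sub]; abel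
    rw [heq]
    calc ‖(w τ - wh τ) - η • (v τ - vh τ)‖
        ≤ ‖w τ - wh τ‖ + ‖η • (v τ - vh τ)‖ := norm_sub_le _ _
      _ = ‖w τ - wh τ‖ + η * ‖v τ - vh τ‖ := by
          rw [norm_smul, Real.norm_eq_abs, abs_of_pos hη]
  have hbrec : ∀ τ, τ + 1 ≤ E - 1 →
      ‖v (τ+1) - vh (τ+1)‖
        ≤ ‖v τ - vh τ‖ + L * ‖w (τ+1) - wh (τ+1)‖ + L * ‖w τ - wh τ‖ := by
    intro τ hτ
    have h1 := hv (τ+1) (Nat.le_add_left 1 τ) hτ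
    have h2 := hvh (τ+1) (Nat.le_add_left 1 τ) hτ
    simp only [Nat.add_sub_cancel] at h1 h2
    rw [h1, h2]
    have heq : G (τ+1) (w (τ+1)) + v τ - G (τ+1) (w τ)
        - (G (τ+1) (wh (τ+1)) + vh τ - G (τ+1) (wh τ))
        = ((v τ - vh τ) + (G (τ+1) (w (τ+1)) - G (τ+1) (wh (τ+1))))
          - (G (τ+1) (w τ) - G (τ+1) (wh τ)) := by abel
    rw [heq]
    calc ‖((v τ - vh τ) + (G (τ+1) (w (τ+1)) - G (τ+1) (wh (τ+1))))
          - (G (τ+1) (w τ) - G (τ+1) (wh τ))‖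
        ≤ ‖(v τ - vh τ) + (G (τ+1) (w (τ+1)) - G (τ+1) (wh (τ+1)))‖
          + ‖G (τ+1) (w τ) - G (τ+1) (wh τ)‖ := norm_sub_le _ _
      _ ≤ (‖v τ - vh τ‖ + ‖G (τ+1) (w (τ+1)) - G (τ+1) (wh (τ+1))‖)
          + ‖G (τ+1) (w τ) - G (τ+1) (wh τ)‖ := by
            gcongr; exact norm_add_le _ _
      _ ≤ ‖v τ - vh τ‖ + L * ‖w (τ+1) - wh (τ+1)‖ + L * ‖w τ - wh τ‖ := by
            have := hGlip (τ+1) (w (τ+1)) (wh (τ+1))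
            have := hGlip (τ+1) (w τ) (wh τ)
            linarith
  -- key induction
  have key : ∀ τ, τ ≤ E - 1 →
      ‖w τ - wh τ‖ ≤ q ^ τ * ‖wk - wk1‖ ∧
      ‖v τ - vh τ‖ ≤ 2 * L * ((τ:ℝ)+1) * q ^ τ * ‖wk - wk1‖ := by
    intro τ
    induction τ with
    | zero =>
      intro _
      constructor
      · simp [hw0, hwh0]
      · rw [hv0, hvh0]
        have := hsmooth wk wk1
        simp only [pow_zero, Nat.cast_zero, zero_add, mul_one]
        nlinarith
    | succ τ ih =>
      intro hτ1
      have hτ : τ ≤ E - 1 := le_of_lt (lt_of_lt_of_le (Nat.lt_succ_self τ) hτ1)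
      obtain ⟨iha, ihb⟩ := ih hτ
      have hτE : ((τ:ℝ)+1) ≤ (E:ℝ) := by
        have : τ + 1 ≤ E := le_trans hτ1 (Nat.sub_le E 1)
        exact_mod_cast this
      have hqτ : (0:ℝ) < q ^ τ := pow_pos hqpos τ
      have hqmono : q ^ τ ≤ q ^ (τ+1) := pow_le_pow_right₀ hq1 (Nat.le_succ τ)
      have h2 : 2*η*L*((τ:ℝ)+1) ≤ 1/(E:ℝ) := by
        have hmul : 2*η*L*((τ:ℝ)+1) ≤ 2*η*L*(E:ℝ) :=
          mul_le_mul_of_nonneg_left hτE (by positivity)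
        linarith
      have ha' : ‖w (τ+1) - wh (τ+1)‖ ≤ q ^ (τ+1) * ‖wk - wk1‖ := by
        have h := harec τ hτ
        have hb' : η * ‖v τ - vh τ‖ ≤ η * (2 * L * ((τ:ℝ)+1) * q ^ τ * ‖wk - wk1‖) :=
          mul_le_mul_of_nonneg_left ihb hη.le
        have h2' : 2*η*L*((τ:ℝ)+1) ≤ q - 1 := by rw [hqdef]; linarith
        have hkey : (2*η*L*((τ:ℝ)+1)) * (q ^ τ * ‖wk - wk1‖)
            ≤ (q - 1) * (q ^ τ * ‖wk - wk1‖) :=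
          mul_le_mul_of_nonneg_right h2' (mul_nonneg hqτ.le hD)
        have hfin : q ^ τ * ‖wk - wk1‖ + η * (2 * L * ((τ:ℝ)+1) * q ^ τ * ‖wk - wk1‖)
            ≤ q ^ (τ+1) * ‖wk - wk1‖ := by
          rw [pow_succ]
          nlinarith [hkey]
        linarith
      refine ⟨ha', ?_⟩
      have hb := hbrec τ hτ1
      have h3 : L * ‖w (τ+1) - wh (τ+1)‖ ≤ L * (q ^ (τ+1) * ‖wk - wk1‖) :=
        mul_le_mul_of_nonneg_left ha' hL.le
      have h4 : L * ‖w τ - wh τ‖ ≤ L * (q ^ τ * ‖wk - wk1‖) :=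
        mul_le_mul_of_nonneg_left iha hL.le
      have hfin : 2 * L * ((τ:ℝ)+1) * q ^ τ * ‖wk - wk1‖ + L * (q ^ (τ+1) * ‖wk - wk1‖)
            + L * (q ^ τ * ‖wk - wk1‖)
          ≤ 2 * L * (((τ:ℝ)+1)+1) * q ^ (τ+1) * ‖wk - wk1‖ := by
        nlinarith [mul_nonneg (mul_nonneg hL.le hD) (sub_nonneg.mpr hqmono),
          mul_nonneg (mul_nonneg (mul_nonneg hL.le hD) (sub_nonneg.mpr hqmono))
            (by positivity : (0:ℝ) ≤ (τ:ℝ)+1)]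
      push_cast
      push_cast at ihb hb
      linarith
  -- telescoping
  have htel : ∀ n, n ≤ E →
      w n = w 0 - ∑ τ ∈ Finset.range n, η • v τ ∧
      wh n = wh 0 - ∑ τ ∈ Finset.range n, η • vh τ := by
    intro n
    induction n with
    | zero => intro _; simp
    | succ n ih =>
      intro hn
      have hn' : n ≤ E - 1 := Nat.le_pred_of_lt hn
      obtain ⟨h1, h2⟩ := ih (le_of_lt hn)
      constructor
      · rw [hw n hn', h1, Finset.sum_range_succ]; abel
      · rw [hwh n hn', h2, Finset.sum_range_succ]; abel
  obtain ⟨hWE, hWhE⟩ := htel E le_rfl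
  have heq : (wk - w E) - (wk1 - wh E) = ∑ τ ∈ Finset.range E, η • (v τ - vh τ) := by
    rw [hWE, hWhE, hw0, hwh0]
    have hsum : ∑ τ ∈ Finset.range E, η • (v τ - vh τ)
        = ∑ τ ∈ Finset.range E, η • v τ - ∑ τ ∈ Finset.range E, η • vh τ := by
      rw [← Finset.sum_sub_distrib]
      exact Finset.sum_congr rfl (fun τ _ => smul_sub η _ _)
    rw [hsum]; abel
  rw [heq]
  have hterm : ∀ τ ∈ Finset.range E,
      ‖η • (v τ - vh τ)‖ ≤ η * (2*L*(E:ℝ)*Real.exp 1*‖wk - wk1‖) := by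
    intro τ hτmem
    have hτlt : τ < E := Finset.mem_range.mp hτmem
    have hτ : τ ≤ E - 1 := Nat.le_pred_of_lt hτlt
    have hb := (key τ hτ).2
    have hτE : ((τ:ℝ)+1) ≤ (E:ℝ) := by exact_mod_cast hτlt
    have hqτ := hqe τ (le_of_lt hτlt)
    have hqτ0 : (0:ℝ) < q ^ τ := pow_pos hqpos τ
    have hbb : ‖v τ - vh τ‖ ≤ 2*L*(E:ℝ)*Real.exp 1*‖wk - wk1‖ := by
      have s1 : ((τ:ℝ)+1) * q ^ τ ≤ (E:ℝ) * Real.exp 1 :=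
        mul_le_mul hτE hqτ hqτ0.le hEpos.le
      calc ‖v τ - vh τ‖ ≤ 2 * L * ((τ:ℝ)+1) * q ^ τ * ‖wk - wk1‖ := hb
        _ ≤ 2*L*(E:ℝ)*Real.exp 1*‖wk - wk1‖ := by
            nlinarith [mul_le_mul_of_nonneg_left s1
              (by positivity : (0:ℝ) ≤ 2*L*‖wk - wk1‖)]
    rw [norm_smul, Real.norm_eq_abs, abs_of_pos hη]
    exact mul_le_mul_of_nonneg_left hbb hη.le
  calc ‖∑ τ ∈ Finset.range E, η • (v τ - vh τ)‖
      ≤ ∑ τ ∈ Finset.range E, ‖η • (v τ - vh τ)‖ := norm_sum_le _ _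
    _ ≤ ∑ _τ ∈ Finset.range E, η * (2*L*(E:ℝ)*Real.exp 1*‖wk - wk1‖) :=
        Finset.sum_le_sum hterm
    _ = (E:ℝ) * (η * (2*L*(E:ℝ)*Real.exp 1*‖wk - wk1‖)) := by
        rw [Finset.sum_const, Finset.card_range, nsmul_eq_mul]
    _ ≤ 2 * Real.exp 1 * (η * L * E * ((E : ℝ) + 1)) * ‖wk - wk1‖ := by
        nlinarith [Real.exp_pos 1,
          mul_nonneg (mul_nonneg (mul_nonneg (mul_nonneg hη.le hL.le) hD) hEpos.le)
            (Real.exp_pos 1).le]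
end

section
/- Consider a client i with L-smooth objective f_i and L-Lipschitz stochastic gradient maps, and two coupled local-momentum sequences built with the SAME batches from starting points w_k and w_{k−1}. Then for every τ ∈ {0,…,E}, ‖w_{k,τ}^{(i)} − ŵ_{k−1,τ}^{(i)}‖ ≤ (1 + 2ηLE)^τ·‖w_k − w_{k−1}‖. -/
open MeasureTheory Finset

set_option maxHeartbeats 1000000 in
/-- claim (eq. 55) inside Lemma "nov-1-lem3".
Client `i` has an `L`-smooth objective `f` and `L`-Lipschitz stochastic-gradient maps
`G τ = ∇̃f_i(·; B_{k,τ}^{(i)})` (the batches are fixed, so this is deterministic).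
Two coupled local-momentum sequences are run from the starting points `wk = w_k` and
`wk1 = w_{k−1}`, using the SAME batch at each local step.  Then for every `τ ∈ {0,…,E}`,
`‖w_{k,τ} − ŵ_{k−1,τ}‖ ≤ (1 + 2ηLE)^τ · ‖w_k − w_{k−1}‖`. -/
theorem stmt12
    {d : ℕ} (L η : ℝ) (hL : 0 < L) (hη : 0 < η) (E : ℕ) (hE : 1 ≤ E)
    (f : EuclideanSpace ℝ (Fin d) → ℝ)
    (hdiff : Differentiable ℝ f)
    (hsmooth : ∀ x y, ‖gradient f x - gradient f y‖ ≤ L * ‖x - y‖)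
    (G : ℕ → EuclideanSpace ℝ (Fin d) → EuclideanSpace ℝ (Fin d))
    (hGlip : ∀ τ x y, ‖G τ x - G τ y‖ ≤ L * ‖x - y‖)
    (wk wk1 : EuclideanSpace ℝ (Fin d))
    (w wh v vh : ℕ → EuclideanSpace ℝ (Fin d))
    (hw0 : w 0 = wk) (hwh0 : wh 0 = wk1)
    (hv0 : v 0 = gradient f wk) (hvh0 : vh 0 = gradient f wk1)
    (hv : ∀ τ, 1 ≤ τ → τ ≤ E - 1 → v τ = G τ (w τ) + v (τ - 1) - G τ (w (τ - 1)))
    (hvh : ∀ τ, 1 ≤ τ → τ ≤ E - 1 → vh τ = G τ (wh τ) + vh (τ - 1) - G τ (wh (τ - 1)))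
    (hw : ∀ τ, τ ≤ E - 1 → w (τ + 1) = w τ - η • v τ)
    (hwh : ∀ τ, τ ≤ E - 1 → wh (τ + 1) = wh τ - η • vh τ) :
    ∀ τ, τ ≤ E →
      ‖w τ - wh τ‖ ≤ (1 + 2 * η * L * E) ^ τ * ‖wk - wk1‖ := by

  have hD0 : 0 ≤ ‖wk - wk1‖ := norm_nonneg _
  set A : ℝ := 1 + 2 * η * L * E with hA
  have hA1 : 1 ≤ A := by
    have h0 : 0 ≤ 2 * η * L * E := by positivity
    simp only [hA]; linarith
  have hA0 : 0 ≤ A := by linarith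
  -- the one-step distance bound
  have hstep : ∀ σ, σ ≤ E - 1 →
      ‖w σ - wh σ‖ ≤ A ^ σ * ‖wk - wk1‖ →
      ‖v σ - vh σ‖ ≤ L * (2 * σ + 1) * A ^ σ * ‖wk - wk1‖ →
      ‖w (σ + 1) - wh (σ + 1)‖ ≤ A ^ (σ + 1) * ‖wk - wk1‖ := by
    intro σ hσ hD hV
    have hσE : (σ : ℝ) + 1 ≤ E := by
      have : σ + 1 ≤ E := by omega
      exact_mod_cast this
    rw [hw σ hσ, hwh σ hσ]
    have heq : w σ - η • v σ - (wh σ - η • vh σ)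
        = (w σ - wh σ) - η • (v σ - vh σ) := by
      rw [smul_sub]; abel
    rw [heq]
    have h1 : ‖(w σ - wh σ) - η • (v σ - vh σ)‖
        ≤ ‖w σ - wh σ‖ + η * ‖v σ - vh σ‖ := by
      calc ‖(w σ - wh σ) - η • (v σ - vh σ)‖
          ≤ ‖w σ - wh σ‖ + ‖η • (v σ - vh σ)‖ := norm_sub_le _ _
        _ = ‖w σ - wh σ‖ + η * ‖v σ - vh σ‖ := by
            rw [norm_smul, Real.norm_eq_abs, abs_of_pos hη]
    have hpow : (0:ℝ) ≤ A ^ σ := pow_nonneg hA0 σ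
    have h2 : η * L * (2 * (σ:ℝ) + 1) ≤ 2 * η * L * E := by nlinarith
    calc ‖(w σ - wh σ) - η • (v σ - vh σ)‖
        ≤ ‖w σ - wh σ‖ + η * ‖v σ - vh σ‖ := h1
      _ ≤ A ^ σ * ‖wk - wk1‖ + η * (L * (2 * σ + 1) * A ^ σ * ‖wk - wk1‖) := by
          have := hV
          nlinarith [norm_nonneg (v σ - vh σ)]
      _ ≤ A ^ (σ + 1) * ‖wk - wk1‖ := by
          rw [pow_succ, hA]
          nlinarith [mul_nonneg hpow hD0]
  -- joint induction
  have key : ∀ σ, σ ≤ E - 1 →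
      ‖w σ - wh σ‖ ≤ A ^ σ * ‖wk - wk1‖ ∧
      ‖v σ - vh σ‖ ≤ L * (2 * σ + 1) * A ^ σ * ‖wk - wk1‖ := by
    intro σ
    induction σ with
    | zero =>
      intro _
      constructor
      · simp [hw0, hwh0]
      · rw [hv0, hvh0]
        have := hsmooth wk wk1
        simpa using this
    | succ σ ih =>
      intro hσ1
      have hσ : σ ≤ E - 1 := Nat.le_of_succ_le hσ1
      obtain ⟨hD, hV⟩ := ih hσ
      have hDs : ‖w (σ + 1) - wh (σ + 1)‖ ≤ A ^ (σ + 1) * ‖wk - wk1‖ :=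
        hstep σ hσ hD hV
      refine ⟨hDs, ?_⟩
      have h1le : 1 ≤ σ + 1 := Nat.le_add_left 1 σ
      have hveq : v (σ + 1) - vh (σ + 1)
          = (G (σ + 1) (w (σ + 1)) - G (σ + 1) (wh (σ + 1)))
            + (v σ - vh σ) - (G (σ + 1) (w σ) - G (σ + 1) (wh σ)) := by
        rw [hv (σ + 1) h1le hσ1, hvh (σ + 1) h1le hσ1]
        simp only [Nat.add_sub_cancel]
        abel
      rw [hveq]
      have hn : ‖(G (σ + 1) (w (σ + 1)) - G (σ + 1) (wh (σ + 1)))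
            + (v σ - vh σ) - (G (σ + 1) (w σ) - G (σ + 1) (wh σ))‖
          ≤ ‖G (σ + 1) (w (σ + 1)) - G (σ + 1) (wh (σ + 1))‖
            + ‖v σ - vh σ‖ + ‖G (σ + 1) (w σ) - G (σ + 1) (wh σ)‖ := by
        calc _ ≤ ‖(G (σ + 1) (w (σ + 1)) - G (σ + 1) (wh (σ + 1))) + (v σ - vh σ)‖
              + ‖G (σ + 1) (w σ) - G (σ + 1) (wh σ)‖ := norm_sub_le _ _
          _ ≤ _ := by
              gcongr
              exact norm_add_le _ _
      have hg1 := hGlip (σ + 1) (w (σ + 1)) (wh (σ + 1))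
      have hg2 := hGlip (σ + 1) (w σ) (wh σ)
      have hpowle : A ^ σ ≤ A ^ (σ + 1) := pow_le_pow_right₀ hA1 (Nat.le_succ σ)
      have hpow : (0:ℝ) ≤ A ^ σ := pow_nonneg hA0 σ
      have hc : ((σ : ℝ) + 1) = ((σ + 1 : ℕ) : ℝ) := by push_cast; ring
      calc ‖(G (σ + 1) (w (σ + 1)) - G (σ + 1) (wh (σ + 1)))
            + (v σ - vh σ) - (G (σ + 1) (w σ) - G (σ + 1) (wh σ))‖
          ≤ ‖G (σ + 1) (w (σ + 1)) - G (σ + 1) (wh (σ + 1))‖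
            + ‖v σ - vh σ‖ + ‖G (σ + 1) (w σ) - G (σ + 1) (wh σ)‖ := hn
        _ ≤ L * ‖w (σ + 1) - wh (σ + 1)‖ + ‖v σ - vh σ‖ + L * ‖w σ - wh σ‖ := by
            linarith
        _ ≤ L * (A ^ (σ + 1) * ‖wk - wk1‖) + L * (2 * σ + 1) * A ^ σ * ‖wk - wk1‖
            + L * (A ^ σ * ‖wk - wk1‖) := by
            have hw1 := hDs
            nlinarith [norm_nonneg (w (σ+1) - wh (σ+1)), norm_nonneg (w σ - wh σ)]
        _ ≤ L * (2 * ((σ:ℝ) + 1) + 1) * A ^ (σ + 1) * ‖wk - wk1‖ := by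
            have hXY : A ^ σ * ‖wk - wk1‖ ≤ A ^ (σ + 1) * ‖wk - wk1‖ :=
              mul_le_mul_of_nonneg_right hpowle hD0
            nlinarith [hXY, hL.le, (Nat.cast_nonneg σ : (0:ℝ) ≤ σ),
              mul_le_mul_of_nonneg_left hXY (by positivity : (0:ℝ) ≤ L * (2 * (σ:ℝ) + 2))]
        _ = L * (2 * ((σ + 1 : ℕ) : ℝ) + 1) * A ^ (σ + 1) * ‖wk - wk1‖ := by
            rw [hc]
  intro τ hτ
  by_cases hcase : τ ≤ E - 1
  · exact (key τ hcase).1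
  · have hτE : τ = E := by omega
    rw [hτE]
    have hE1 : E - 1 + 1 = E := by omega
    have hle : E - 1 ≤ E - 1 := le_refl _
    obtain ⟨hD, hV⟩ := key (E - 1) hle
    have := hstep (E - 1) hle hD hV
    rwa [hE1] at this
end

section
/- Consider a client i with L-smooth objective f_i and L-Lipschitz stochastic gradient maps, and two coupled local-momentum sequences built with the SAME batches from starting points w_k and w_{k−1}. Then for every τ ∈ {0,…,E−1}: (i) ‖v_{k,τ}^{(i)} − v̂_{k−1,τ}^{(i)}‖ ≤ 2L·Σ_{t=0}^{τ} ‖w_{k,t}^{(i)} − ŵ_{k−1,t}^{(i)}‖; and consequently (ii) ‖v_{k,τ}^{(i)} − v̂_{k−1,τ}^{(i)}‖ ≤ 2L(τ+1)(1 + 2ηLE)^τ·‖w_k − w_{k−1}‖. -/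
open MeasureTheory Finset

set_option maxHeartbeats 1000000

/-- claims (eq. 53) and (eq. 58) inside Lemma "nov-1-lem3".
Client `i` has an `L`-smooth objective `f` and `L`-Lipschitz stochastic-gradient maps
`G τ = ∇̃f_i(·; B_{k,τ}^{(i)})` (the batches are fixed, so this is deterministic).
Two coupled local-momentum sequences are run from the starting points `wk = w_k` and
`wk1 = w_{k−1}`, using the SAME batch at each local step.  Then for every
`τ ∈ {0,…,E−1}`:
(i)  `‖v_{k,τ} − v̂_{k−1,τ}‖ ≤ 2L·Σ_{t=0}^{τ} ‖w_{k,t} − ŵ_{k−1,t}‖`, and consequently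
(ii) `‖v_{k,τ} − v̂_{k−1,τ}‖ ≤ 2L(τ+1)(1 + 2ηLE)^τ · ‖w_k − w_{k−1}‖`. -/
theorem stmt13
    {d : ℕ} (L η : ℝ) (hL : 0 < L) (hη : 0 < η) (E : ℕ) (hE : 1 ≤ E)
    (f : EuclideanSpace ℝ (Fin d) → ℝ)
    (hdiff : Differentiable ℝ f)
    (hsmooth : ∀ x y, ‖gradient f x - gradient f y‖ ≤ L * ‖x - y‖)
    (G : ℕ → EuclideanSpace ℝ (Fin d) → EuclideanSpace ℝ (Fin d))
    (hGlip : ∀ τ x y, ‖G τ x - G τ y‖ ≤ L * ‖x - y‖)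
    (wk wk1 : EuclideanSpace ℝ (Fin d))
    (w wh v vh : ℕ → EuclideanSpace ℝ (Fin d))
    (hw0 : w 0 = wk) (hwh0 : wh 0 = wk1)
    (hv0 : v 0 = gradient f wk) (hvh0 : vh 0 = gradient f wk1)
    (hv : ∀ τ, 1 ≤ τ → τ ≤ E - 1 → v τ = G τ (w τ) + v (τ - 1) - G τ (w (τ - 1)))
    (hvh : ∀ τ, 1 ≤ τ → τ ≤ E - 1 → vh τ = G τ (wh τ) + vh (τ - 1) - G τ (wh (τ - 1)))
    (hw : ∀ τ, τ ≤ E - 1 → w (τ + 1) = w τ - η • v τ)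
    (hwh : ∀ τ, τ ≤ E - 1 → wh (τ + 1) = wh τ - η • vh τ) :
    ∀ τ, τ ≤ E - 1 →
      ‖v τ - vh τ‖ ≤ 2 * L * ∑ t ∈ Finset.range (τ + 1), ‖w t - wh t‖ ∧
      ‖v τ - vh τ‖ ≤ 2 * L * ((τ : ℝ) + 1) * (1 + 2 * η * L * E) ^ τ * ‖wk - wk1‖ := by
  intro τ hτ
  have hDnn : ∀ t, (0:ℝ) ≤ ‖w t - wh t‖ := fun t => norm_nonneg _
  have hD0 : ‖w 0 - wh 0‖ = ‖wk - wk1‖ := by rw [hw0, hwh0]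
  have hD0nn : (0:ℝ) ≤ ‖wk - wk1‖ := norm_nonneg _
  set c : ℝ := 1 + 2 * η * L * E with hc
  have hc1 : (1:ℝ) ≤ c := by
    have : (0:ℝ) ≤ 2 * η * L * E := by positivity
    linarith
  have hstep : ∀ t, t ≤ E - 1 →
      ‖w (t+1) - wh (t+1)‖ ≤ ‖w t - wh t‖ + η * ‖v t - vh t‖ := by
    intro t ht
    rw [hw t ht, hwh t ht]
    have heq : w t - η • v t - (wh t - η • vh t) = (w t - wh t) - η • (v t - vh t) := by
      rw [smul_sub]; abel
    rw [heq]
    calc ‖(w t - wh t) - η • (v t - vh t)‖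
        ≤ ‖w t - wh t‖ + ‖η • (v t - vh t)‖ := norm_sub_le _ _
      _ = ‖w t - wh t‖ + η * ‖v t - vh t‖ := by
          rw [norm_smul, Real.norm_eq_abs, abs_of_pos hη]
  have key : ∀ τ, τ ≤ E - 1 →
      (‖v τ - vh τ‖ ≤ L * ‖w 0 - wh 0‖ +
        L * ∑ s ∈ Finset.range τ, (‖w (s+1) - wh (s+1)‖ + ‖w s - wh s‖)) ∧
      (∀ t, t ≤ τ + 1 → ‖w t - wh t‖ ≤ c ^ t * ‖wk - wk1‖) := by
    intro τ
    induction τ with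
    | zero =>
      intro _
      have hv00 : ‖v 0 - vh 0‖ ≤ L * ‖w 0 - wh 0‖ := by
        rw [hv0, hvh0, hD0]; exact hsmooth wk wk1
      constructor
      · simpa using hv00
      · intro t ht
        interval_cases t
        · simp [hD0]
        · have h1 : ‖w 1 - wh 1‖ ≤ ‖w 0 - wh 0‖ + η * ‖v 0 - vh 0‖ :=
            hstep 0 (Nat.zero_le _)
          have hE1 : (1:ℝ) ≤ (E:ℝ) := by exact_mod_cast hE
          rw [hD0] at h1 hv00
          rw [pow_one, hc]
          have k1 : η * ‖v 0 - vh 0‖ ≤ η * (L * ‖wk - wk1‖) :=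
            mul_le_mul_of_nonneg_left hv00 hη.le
          have k2 : η * L * ‖wk - wk1‖ ≤ η * L * ‖wk - wk1‖ * E :=
            le_mul_of_one_le_right (by positivity) hE1
          nlinarith [mul_nonneg (mul_nonneg (mul_nonneg hη.le hL.le) hD0nn) (le_trans zero_le_one hE1)]
    | succ n ih =>
      intro hτ1
      have hn : n ≤ E - 1 := le_trans (Nat.le_succ n) hτ1
      obtain ⟨iha, ihb⟩ := ih hn
      have hv1 : v (n+1) = G (n+1) (w (n+1)) + v n - G (n+1) (w n) := by
        have := hv (n+1) (Nat.succ_le_succ (Nat.zero_le n)) hτ1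
        simpa using this
      have hvh1 : vh (n+1) = G (n+1) (wh (n+1)) + vh n - G (n+1) (wh n) := by
        have := hvh (n+1) (Nat.succ_le_succ (Nat.zero_le n)) hτ1
        simpa using this
      have hdecomp : v (n+1) - vh (n+1) =
          (G (n+1) (w (n+1)) - G (n+1) (wh (n+1))) + (v n - vh n)
            - (G (n+1) (w n) - G (n+1) (wh n)) := by
        rw [hv1, hvh1]; abel
      have ha : ‖v (n+1) - vh (n+1)‖ ≤ L * ‖w 0 - wh 0‖ +
          L * ∑ s ∈ Finset.range (n+1), (‖w (s+1) - wh (s+1)‖ + ‖w s - wh s‖) := by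
        rw [hdecomp, Finset.sum_range_succ]
        calc ‖(G (n+1) (w (n+1)) - G (n+1) (wh (n+1))) + (v n - vh n)
              - (G (n+1) (w n) - G (n+1) (wh n))‖
            ≤ ‖(G (n+1) (w (n+1)) - G (n+1) (wh (n+1))) + (v n - vh n)‖
              + ‖G (n+1) (w n) - G (n+1) (wh n)‖ := norm_sub_le _ _
          _ ≤ ‖G (n+1) (w (n+1)) - G (n+1) (wh (n+1))‖ + ‖v n - vh n‖
              + ‖G (n+1) (w n) - G (n+1) (wh n)‖ := by
              gcongr
              exact norm_add_le _ _
          _ ≤ L * ‖w (n+1) - wh (n+1)‖ + ‖v n - vh n‖ + L * ‖w n - wh n‖ := by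
              gcongr <;> [exact hGlip _ _ _; exact hGlip _ _ _]
          _ ≤ _ := by nlinarith [iha, hL.le]
      refine ⟨ha, ?_⟩
      intro t ht
      rcases Nat.lt_or_ge t (n+2) with h | h
      · exact ihb t (Nat.lt_succ_iff.mp h)
      · have ht2 : t = n + 2 := le_antisymm ht h
        subst ht2
        have hE2 : (n:ℝ) + 2 ≤ (E:ℝ) := by
          have : n + 2 ≤ E := by omega
          exact_mod_cast this
        have hcp : (1:ℝ) ≤ c ^ (n+1) := one_le_pow₀ hc1
        have hbv : ‖v (n+1) - vh (n+1)‖ ≤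
            L * ‖wk - wk1‖ + L * (((n:ℝ)+1) * (2 * c^(n+1) * ‖wk - wk1‖)) := by
          refine ha.trans ?_
          rw [hD0]
          have hsumb : ∑ s ∈ Finset.range (n+1), (‖w (s+1) - wh (s+1)‖ + ‖w s - wh s‖)
              ≤ ((n:ℝ)+1) * (2 * c^(n+1) * ‖wk - wk1‖) := by
            calc ∑ s ∈ Finset.range (n+1), (‖w (s+1) - wh (s+1)‖ + ‖w s - wh s‖)
                ≤ ∑ _s ∈ Finset.range (n+1), (2 * c^(n+1) * ‖wk - wk1‖) := by
                  refine Finset.sum_le_sum fun s hs => ?_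
                  have hsle : s + 1 ≤ n + 1 := Finset.mem_range.mp hs
                  have e1 := ihb (s+1) hsle
                  have e2 := ihb s (by omega)
                  have p1 : c ^ (s+1) ≤ c ^ (n+1) := pow_le_pow_right₀ hc1 hsle
                  have p2 : c ^ s ≤ c ^ (n+1) := pow_le_pow_right₀ hc1 (by omega)
                  have q1 : c ^ (s+1) * ‖wk - wk1‖ ≤ c ^ (n+1) * ‖wk - wk1‖ :=
                    mul_le_mul_of_nonneg_right p1 hD0nn
                  have q2 : c ^ s * ‖wk - wk1‖ ≤ c ^ (n+1) * ‖wk - wk1‖ :=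
                    mul_le_mul_of_nonneg_right p2 hD0nn
                  linarith
              _ = ((n:ℝ)+1) * (2 * c^(n+1) * ‖wk - wk1‖) := by
                  rw [Finset.sum_const, Finset.card_range]; push_cast; ring
          nlinarith [hL.le]
        have hst := hstep (n+1) hτ1
        have hbn1 : ‖w (n+1) - wh (n+1)‖ ≤ c ^ (n+1) * ‖wk - wk1‖ := ihb (n+1) le_rfl
        have hpow : c ^ (n+2) = c ^ (n+1) * c := pow_succ c (n+1)
        have s1 : ‖w (n+2) - wh (n+2)‖ ≤ c^(n+1) * ‖wk - wk1‖
            + η * (L * ‖wk - wk1‖ + L * (((n:ℝ)+1) * (2 * c^(n+1) * ‖wk - wk1‖))) :=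
          hst.trans (add_le_add hbn1 (mul_le_mul_of_nonneg_left hbv hη.le))
        have t2 : (0:ℝ) ≤ η * L * ‖wk - wk1‖ := by positivity
        have t3 : ((n:ℝ)+2) * (c^(n+1)) ≤ (E:ℝ) * (c^(n+1)) :=
          mul_le_mul_of_nonneg_right hE2 (by positivity)
        rw [hpow, hc]
        linarith [s1, t2, mul_le_mul_of_nonneg_left t3 t2,
          mul_le_mul_of_nonneg_left hcp t2]
  obtain ⟨ka, kb⟩ := key τ hτ
  have hi : ‖v τ - vh τ‖ ≤ 2 * L * ∑ t ∈ Finset.range (τ + 1), ‖w t - wh t‖ := by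
    refine ka.trans ?_
    have hsplit : ∑ s ∈ Finset.range τ, (‖w (s+1) - wh (s+1)‖ + ‖w s - wh s‖)
        = (∑ s ∈ Finset.range τ, ‖w (s+1) - wh (s+1)‖) + ∑ s ∈ Finset.range τ, ‖w s - wh s‖ :=
      Finset.sum_add_distrib
    have h1 : ‖w 0 - wh 0‖ + ∑ s ∈ Finset.range τ, ‖w (s+1) - wh (s+1)‖
        = ∑ t ∈ Finset.range (τ+1), ‖w t - wh t‖ := by
      rw [Finset.sum_range_succ' (fun t => ‖w t - wh t‖) τ]; ring
    have h2 : ∑ s ∈ Finset.range τ, ‖w s - wh s‖ ≤ ∑ t ∈ Finset.range (τ+1), ‖w t - wh t‖ := by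
      rw [Finset.sum_range_succ]
      exact le_add_of_nonneg_right (hDnn τ)
    rw [hsplit]
    nlinarith [hL.le]
  refine ⟨hi, ?_⟩
  have hsum2 : ∑ t ∈ Finset.range (τ + 1), ‖w t - wh t‖
      ≤ ((τ:ℝ) + 1) * (c ^ τ * ‖wk - wk1‖) := by
    calc ∑ t ∈ Finset.range (τ + 1), ‖w t - wh t‖
        ≤ ∑ _t ∈ Finset.range (τ + 1), c ^ τ * ‖wk - wk1‖ := by
          refine Finset.sum_le_sum fun t htm => ?_
          have ht' : t ≤ τ := Nat.lt_succ_iff.mp (Finset.mem_range.mp htm)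
          refine (kb t (ht'.trans (Nat.le_succ τ))).trans ?_
          exact mul_le_mul_of_nonneg_right (pow_le_pow_right₀ hc1 ht') hD0nn
      _ = ((τ:ℝ) + 1) * (c ^ τ * ‖wk - wk1‖) := by
          rw [Finset.sum_const, Finset.card_range]; push_cast; ring
  calc ‖v τ - vh τ‖ ≤ 2 * L * ∑ t ∈ Finset.range (τ + 1), ‖w t - wh t‖ := hi
    _ ≤ 2 * L * (((τ:ℝ) + 1) * (c ^ τ * ‖wk - wk1‖)) :=
        mul_le_mul_of_nonneg_left hsum2 (by positivity)
    _ = 2 * L * ((τ:ℝ) + 1) * c ^ τ * ‖wk - wk1‖ := by ring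
end

section
/- For a single client running E local SGD steps with an L-smooth objective f_i and unbiased stochastic gradients of variance at most σ², if η_k·L·E ≤ 1/2 then for every τ ≤ E the accumulated local gradient norms satisfy Σ_{t=0}^{τ−1} E[‖∇f_i(w_{k,t}^{(i)})‖²] ≤ (τ/3)·(8·E[‖∇f_i(w_k)‖²] + σ²). -/
open MeasureTheory Finset
open scoped ENNReal
set_option maxHeartbeats 1000000


theorem aux_lintegral_prod_le {α β : Type*} [MeasurableSpace α] [MeasurableSpace β]
    (μ : Measure α) (ν : Measure β) [SFinite μ] [SFinite ν] (f : α × β → ℝ≥0∞) :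
    ∫⁻ z, f z ∂(μ.prod ν) ≤ ∫⁻ y, ∫⁻ x, f (x, y) ∂μ ∂ν := by
  obtain ⟨g, gmeas, gle, geq⟩ := exists_measurable_le_lintegral_eq (μ.prod ν) f
  rw [geq, lintegral_prod_symm _ gmeas.aemeasurable]
  exact lintegral_mono fun y => lintegral_mono fun x => gle _

theorem aux_lintegral_le_prod_snd {α β : Type*} [MeasurableSpace α] [MeasurableSpace β]
    (μ : Measure α) (ν : Measure β) [IsProbabilityMeasure μ] [SFinite ν] (f : β → ℝ≥0∞) :
    ∫⁻ y, f y ∂ν ≤ ∫⁻ z, f z.2 ∂(μ.prod ν) := by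
  obtain ⟨g, gmeas, gle, geq⟩ := exists_measurable_le_lintegral_eq ν f
  rw [geq]
  have h : ∫⁻ z, g z.2 ∂(μ.prod ν) = ∫⁻ y, g y ∂ν := by
    rw [lintegral_prod_symm (fun z : α × β => g z.2) ((gmeas.comp measurable_snd).aemeasurable)]
    simp
  rw [← h]
  exact lintegral_mono fun z => gle _

theorem aux_sum_sq (τ : ℕ) : 3 * ∑ t ∈ Finset.range τ, (t : ℝ) ^ 2 ≤ (τ : ℝ) ^ 3 := by
  induction τ with
  | zero => simp
  | succ n ih =>
    rw [Finset.sum_range_succ]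
    push_cast
    nlinarith [ih, Nat.cast_nonneg (α := ℝ) n]

theorem aux_pow_le (E : ℕ) (hE : 1 ≤ E) (t : ℕ) (ht : t ≤ E) :
    (1 + 1 / (2 * (E : ℝ))) ^ t ≤ 5 / 3 := by
  have hEpos : (0:ℝ) < E := by exact_mod_cast hE
  have h1 : (1 + 1 / (2 * (E:ℝ))) ^ t ≤ Real.exp (1 / (2 * E)) ^ t := by
    apply pow_le_pow_left₀ (by positivity)
    linarith [Real.add_one_le_exp (1 / (2 * (E:ℝ)))]
  have h2 : Real.exp (1 / (2 * (E:ℝ))) ^ t = Real.exp (t / (2 * E)) := by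
    rw [← Real.exp_nat_mul]; ring_nf
  have h3 : Real.exp ((t:ℝ) / (2 * E)) ≤ Real.exp (1 / 2) := by
    apply Real.exp_le_exp.2
    rw [div_le_iff₀ (by positivity)]
    have : (t:ℝ) ≤ E := by exact_mod_cast ht
    nlinarith
  have h4 : Real.exp (1/2 : ℝ) ≤ 5 / 3 := by
    nlinarith [Real.exp_one_lt_d9, Real.exp_pos (1/2 : ℝ),
      Real.exp_add (1/2 : ℝ) (1/2 : ℝ), Real.exp_one_gt_d9]
  calc (1 + 1 / (2 * (E : ℝ))) ^ t ≤ Real.exp ((t:ℝ) / (2 * E)) := by rw [← h2]; exact h1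
    _ ≤ 5/3 := le_trans h3 h4


/-- Lemma "sept26-lem1".
A single client with an `L`-smooth objective `f` runs `E` local SGD steps in round `k`,
starting at `wk = w_k`, with step size `η = η_k`: the batches `B_{k,0},…,B_{k,E−1}` are
the coordinates of the product probability space `Fin E → Bt`, and the stochastic
gradients `G · b` are unbiased with variance at most `σ²`.  If `η_k·L·E ≤ 1/2`, then
for every `τ ≤ E`,
`Σ_{t=0}^{τ−1} E[‖∇f(w_{k,t})‖²] ≤ (τ/3)·(8·E[‖∇f(w_k)‖²] + σ²)`
(the expectation is over the local batches of round `k`, so `E[‖∇f(w_k)‖²] = ‖∇f(w_k)‖²`). -/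
theorem stmt19
    {d : ℕ} {Bt : Type*} [MeasurableSpace Bt]
    (μB : Measure Bt) [IsProbabilityMeasure μB]
    (E : ℕ) (hE : 1 ≤ E) (η L σ : ℝ) (hη : 0 < η) (hL : 0 < L) (hσ : 0 ≤ σ)
    (f : EuclideanSpace ℝ (Fin d) → ℝ)
    (hdiff : Differentiable ℝ f)
    (hsmooth : ∀ x y, ‖gradient f x - gradient f y‖ ≤ L * ‖x - y‖)
    (G : EuclideanSpace ℝ (Fin d) → Bt → EuclideanSpace ℝ (Fin d))
    (hGint : ∀ x, Integrable (G x) μB)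
    (hGunb : ∀ x, ∫ b, G x b ∂μB = gradient f x)
    (hGvarInt : ∀ x, Integrable (fun b => ‖G x b - gradient f x‖ ^ 2) μB)
    (hGvar : ∀ x, ∫ b, ‖G x b - gradient f x‖ ^ 2 ∂μB ≤ σ ^ 2)
    (wk : EuclideanSpace ℝ (Fin d))
    (w : ℕ → (Fin E → Bt) → EuclideanSpace ℝ (Fin d))
    (hw0 : ∀ ω, w 0 ω = wk)
    (hw : ∀ τ (h : τ < E), ∀ ω, w (τ + 1) ω = w τ ω - η • G (w τ ω) (ω ⟨τ, h⟩))
    (hstep : η * L * E ≤ 1 / 2) :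
    ∀ τ, τ ≤ E →
      ∑ t ∈ Finset.range τ,
          ∫ ω, ‖gradient f (w t ω)‖ ^ 2 ∂(Measure.pi fun _ : Fin E => μB)
        ≤ ((τ : ℝ) / 3) * (8 * ‖gradient f wk‖ ^ 2 + σ ^ 2) := by
  obtain ⟨n, rfl⟩ : ∃ n, E = n + 1 := ⟨E - 1, (Nat.succ_pred_eq_of_pos hE).symm⟩
  have hBt : Nonempty Bt := by
    rcases isEmpty_or_nonempty Bt with h | h
    · exfalso
      have h1 : μB Set.univ = 1 := measure_univ
      rw [Set.univ_eq_empty_iff.mpr h] at h1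
      simp at h1
    · exact h
  obtain ⟨b₀⟩ := hBt
  set ν := (Measure.pi fun _ : Fin (n+1) => μB) with hν
  haveI hνP : IsProbabilityMeasure ν := by rw [hν]; infer_instance
  set g := gradient f with hgdef
  set γ := η * L with hγdef
  have hNpos : (0:ℝ) < (n:ℝ) + 1 := by positivity
  have hγpos : 0 < γ := mul_pos hη hL
  have hγE : γ * ((n:ℝ) + 1) ≤ 1/2 := by
    have : ((n+1 : ℕ) : ℝ) = (n:ℝ) + 1 := by push_cast; ring
    rw [hγdef, ← this]
    exact hstep
  have hγsmall : γ ≤ 1 / (2 * ((n:ℝ) + 1)) := by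
    rw [le_div_iff₀ (by positivity)]
    nlinarith
  set x : ℝ := 1 / (2 * ((n:ℝ) + 1)) with hxdef
  have hxpos : 0 < x := by rw [hxdef]; positivity
  -- smoothness consequence
  have hgrad2 : ∀ y, ‖g y‖^2 ≤ 2*L^2*‖y - wk‖^2 + 2*‖g wk‖^2 := by
    intro y
    have h1 := hsmooth y wk
    have h2 : ‖g y‖ ≤ ‖g y - g wk‖ + ‖g wk‖ := by
      have := norm_add_le (g y - g wk) (g wk)
      simpa using this
    have h3 : ‖g y‖ ≤ L * ‖y - wk‖ + ‖g wk‖ := by linarith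
    nlinarith [mul_self_le_mul_self (norm_nonneg (g y)) h3, norm_nonneg (g y),
      norm_nonneg (g wk), norm_nonneg (y - wk), sq_nonneg (L * ‖y - wk‖ - ‖g wk‖)]
  -- w depends only on earlier coordinates
  have hdep : ∀ s, s ≤ n+1 → ∀ ω₁ ω₂ : Fin (n+1) → Bt,
      (∀ k : Fin (n+1), (k:ℕ) < s → ω₁ k = ω₂ k) → w s ω₁ = w s ω₂ := by
    intro s
    induction s with
    | zero => intro _ ω₁ ω₂ _; rw [hw0, hw0]
    | succ s ih =>
      intro hs ω₁ ω₂ hcoord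
      have hsn : s < n+1 := hs
      rw [hw s hsn ω₁, hw s hsn ω₂]
      have h1 : w s ω₁ = w s ω₂ :=
        ih (le_of_lt hsn) ω₁ ω₂ (fun k hk => hcoord k (Nat.lt_succ_of_lt hk))
      rw [h1, hcoord ⟨s, hsn⟩ (Nat.lt_succ_self s)]
  -- extended coordinates and the squared-gradient summands
  set ext : (Fin (n+1) → Bt) → ℕ → Bt :=
    fun ω s => if h : s < n+1 then ω ⟨s, h⟩ else b₀ with hextdef
  set q : ℕ → (Fin (n+1) → Bt) → ℝ := fun s ω => ‖G (w s ω) (ext ω s)‖^2 with hqdef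
  have hqnonneg : ∀ s ω, 0 ≤ q s ω := by
    intro s ω; rw [hqdef]; positivity
  -- pathwise norm bound
  have hnorm : ∀ t, t ≤ n+1 → ∀ ω,
      ‖w t ω - wk‖ ≤ ∑ s ∈ range t, η * ‖G (w s ω) (ext ω s)‖ := by
    intro t
    induction t with
    | zero => intro _ ω; simp [hw0]
    | succ t ih =>
      intro ht ω
      have htn : t < n+1 := ht
      have hextt : ext ω t = ω ⟨t, htn⟩ := by rw [hextdef]; simp [htn]
      rw [Finset.sum_range_succ, hw t htn ω]
      have habel : w t ω - η • G (w t ω) (ω ⟨t, htn⟩) - wk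
          = (w t ω - wk) - η • G (w t ω) (ω ⟨t, htn⟩) := by abel
      rw [habel]
      refine le_trans (norm_sub_le _ _) ?_
      rw [norm_smul, Real.norm_eq_abs, abs_of_pos hη, hextt]
      exact add_le_add (ih (le_of_lt htn) ω) le_rfl
  -- pathwise Cauchy-Schwarz bound
  have hpath : ∀ t, t ≤ n+1 → ∀ ω,
      ‖w t ω - wk‖^2 ≤ (t:ℝ) * η^2 * ∑ s ∈ range t, q s ω := by
    intro t ht ω
    have h1 : ‖w t ω - wk‖^2 ≤ (∑ s ∈ range t, η * ‖G (w s ω) (ext ω s)‖)^2 :=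
      pow_le_pow_left₀ (norm_nonneg _) (hnorm t ht ω) 2
    have h2 : (∑ s ∈ range t, η * ‖G (w s ω) (ext ω s)‖)^2
        ≤ (#(range t) : ℝ) * ∑ s ∈ range t, (η * ‖G (w s ω) (ext ω s)‖)^2 :=
      sq_sum_le_card_mul_sum_sq
    have h3 : ∑ s ∈ range t, (η * ‖G (w s ω) (ext ω s)‖)^2
        = η^2 * ∑ s ∈ range t, q s ω := by
      rw [Finset.mul_sum]
      refine Finset.sum_congr rfl fun s _ => ?_
      rw [hqdef, mul_pow]
    rw [h3, Finset.card_range] at h2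
    calc ‖w t ω - wk‖^2 ≤ (t:ℝ) * (η^2 * ∑ s ∈ range t, q s ω) := le_trans h1 h2
      _ = (t:ℝ) * η^2 * ∑ s ∈ range t, q s ω := by ring
  -- per-point second moment of the stochastic gradient
  have hG2 : ∀ y : EuclideanSpace ℝ (Fin d), Integrable (fun b => ‖G y b‖^2) μB ∧
      ∫ b, ‖G y b‖^2 ∂μB ≤ σ^2 + ‖g y‖^2 := by
    intro y
    have hNint : Integrable (fun b => G y b - g y) μB := (hGint y).sub (integrable_const _)
    have hNmean : ∫ b, (G y b - g y) ∂μB = 0 := by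
      rw [integral_sub (hGint y) (integrable_const _), hGunb y, integral_const]
      simp [hgdef]
    have heq : ∀ b, ‖G y b‖^2
        = ‖G y b - g y‖^2 + (2 * (inner ℝ (g y) (G y b - g y) : ℝ) + ‖g y‖^2) := by
      intro b
      have h := norm_add_sq_real (G y b - g y) (g y)
      rw [sub_add_cancel] at h
      rw [h, real_inner_comm]
      ring
    have hint2 : Integrable (fun b => 2 * (inner ℝ (g y) (G y b - g y) : ℝ) + ‖g y‖^2) μB :=
      ((hNint.const_inner (g y)).const_mul 2).add (integrable_const _)
    have hvar : Integrable (fun b => ‖G y b - g y‖^2) μB := hGvarInt y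
    constructor
    · have hfe : (fun b => ‖G y b‖^2)
          = fun b => ‖G y b - g y‖^2 + (2 * (inner ℝ (g y) (G y b - g y) : ℝ) + ‖g y‖^2) :=
        funext heq
      rw [hfe]
      exact hvar.add hint2
    · have h1 : ∫ b, ‖G y b‖^2 ∂μB
          = ∫ b, (‖G y b - g y‖^2 + (2 * (inner ℝ (g y) (G y b - g y) : ℝ) + ‖g y‖^2)) ∂μB := by
        exact integral_congr_ae (Filter.Eventually.of_forall heq)
      rw [h1, integral_add hvar hint2,
        integral_add ((hNint.const_inner (g y)).const_mul 2) (integrable_const _),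
        integral_const_mul, integral_inner hNint, hNmean, inner_zero_right, integral_const]
      simp only [probReal_univ, measure_univ, ENNReal.toReal_one, one_smul, mul_zero, zero_add, smul_eq_mul]
      have := hGvar y
      rw [hgdef]
      linarith
  -- the running second-moment sums
  set T : ℕ → ℝ≥0∞ :=
    fun t => ∫⁻ ω, ENNReal.ofReal (∑ s ∈ range t, q s ω) ∂ν with hTdef
  set K : ℝ≥0∞ := ENNReal.ofReal (2*‖g wk‖^2 + σ^2) with hKdef
  -- THE conditioning recursion
  have hTrec : ∀ t, t < n+1 → T (t+1) ≤ ENNReal.ofReal (1 + x) * T t + K := by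
    intro t ht
    set i : Fin (n+1) := ⟨t, ht⟩ with hidef
    set e := MeasurableEquiv.piFinSuccAbove (fun _ : Fin (n+1) => Bt) i with hedef
    set ν' := (Measure.pi fun _ : Fin n => μB) with hν'def
    haveI : IsProbabilityMeasure ν' := by rw [hν'def]; infer_instance
    have hmp : MeasurePreserving e ν (μB.prod ν') :=
      measurePreserving_piFinSuccAbove (fun _ : Fin (n+1) => μB) i
    have hmapsymm : Measure.map e.symm (μB.prod ν') = ν := by
      rw [← hmp.map_eq, MeasurableEquiv.map_symm_map]
    have htrans : ∀ F : (Fin (n+1) → Bt) → ℝ≥0∞,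
        ∫⁻ ω, F ω ∂ν = ∫⁻ p, F (e.symm p) ∂(μB.prod ν') := by
      intro F
      rw [← hmapsymm, lintegral_map_equiv F e.symm]
    have hesymm : ∀ p : Bt × (Fin n → Bt),
        e.symm p = i.insertNth (α := fun _ => Bt) p.1 p.2 := by
      intro p; simp [hedef, MeasurableEquiv.piFinSuccAbove, Fin.insertNthEquiv]
    have hins_ne : ∀ (b b' : Bt) (ω' : Fin n → Bt) (k : Fin (n+1)), k ≠ i →
        (e.symm (b, ω')) k = (e.symm (b', ω')) k := by
      intro b b' ω' k hk
      obtain ⟨j, rfl⟩ := Fin.exists_succAbove_eq hk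
      rw [hesymm, hesymm]
      simp
    have hins_same : ∀ (b : Bt) (ω' : Fin n → Bt), (e.symm (b, ω')) i = b := by
      intro b ω'; rw [hesymm]; simp
    have hWeq : ∀ s, s ≤ t → ∀ (b : Bt) (ω' : Fin n → Bt),
        w s (e.symm (b, ω')) = w s (e.symm (b₀, ω')) := by
      intro s hs b ω'
      apply hdep s (le_trans hs (le_of_lt ht))
      intro k hk
      apply hins_ne
      intro hki
      have hkt : (k:ℕ) = t := by rw [hki]
      omega
    have hexts : ∀ s, s < t → ∀ (b : Bt) (ω' : Fin n → Bt),
        ext (e.symm (b, ω')) s = ext (e.symm (b₀, ω')) s := by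
      intro s hs b ω'
      have hsn : s < n+1 := lt_trans hs ht
      rw [hextdef]
      simp only [dif_pos hsn]
      apply hins_ne
      intro hki
      have hkt : s = t := by
        have := congrArg Fin.val hki
        simpa using this
      omega
    have hqeq : ∀ s, s < t → ∀ (b : Bt) (ω' : Fin n → Bt),
        q s (e.symm (b, ω')) = q s (e.symm (b₀, ω')) := by
      intro s hs b ω'
      rw [hqdef]
      simp only
      rw [hWeq s (le_of_lt hs) b ω', hexts s hs b ω']
    set W : (Fin n → Bt) → EuclideanSpace ℝ (Fin d) :=
      fun ω' => w t (e.symm (b₀, ω')) with hWdef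
    set C : (Fin n → Bt) → ℝ := fun ω' => ∑ s ∈ range t, q s (e.symm (b₀, ω')) with hCdef
    have hCnonneg : ∀ ω', 0 ≤ C ω' := by
      intro ω'; rw [hCdef]; exact Finset.sum_nonneg fun s _ => hqnonneg s _
    have hextt : ∀ (b : Bt) (ω' : Fin n → Bt), ext (e.symm (b, ω')) t = b := by
      intro b ω'
      rw [hextdef]
      simp only [dif_pos ht]
      exact hins_same b ω'
    have hFeq : ∀ (b : Bt) (ω' : Fin n → Bt),
        (∑ s ∈ range (t+1), q s (e.symm (b, ω'))) = C ω' + ‖G (W ω') b‖^2 := by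
      intro b ω'
      rw [Finset.sum_range_succ]
      congr 1
      · rw [hCdef]
        exact Finset.sum_congr rfl fun s hs => hqeq s (Finset.mem_range.1 hs) b ω'
      · rw [hqdef]
        simp only
        rw [hextt b ω', hWeq t le_rfl b ω', hWdef]
    -- key per-point bound for the inner integral
    have hinner : ∀ ω' : Fin n → Bt,
        ∫⁻ b, ENNReal.ofReal (C ω' + ‖G (W ω') b‖^2) ∂μB
          ≤ ENNReal.ofReal (C ω' + ‖g (W ω')‖^2) + ENNReal.ofReal (σ^2) := by
      intro ω'
      obtain ⟨hint, hval⟩ := hG2 (W ω')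
      have hsplit : ∀ b : Bt, ENNReal.ofReal (C ω' + ‖G (W ω') b‖^2)
          = ENNReal.ofReal (C ω') + ENNReal.ofReal (‖G (W ω') b‖^2) := by
        intro b
        rw [ENNReal.ofReal_add (hCnonneg ω') (by positivity)]
      calc ∫⁻ b, ENNReal.ofReal (C ω' + ‖G (W ω') b‖^2) ∂μB
          = ∫⁻ b, (ENNReal.ofReal (C ω') + ENNReal.ofReal (‖G (W ω') b‖^2)) ∂μB := by
            exact lintegral_congr fun b => hsplit b
        _ = ENNReal.ofReal (C ω') + ∫⁻ b, ENNReal.ofReal (‖G (W ω') b‖^2) ∂μB := by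
            rw [lintegral_add_left measurable_const, lintegral_const, measure_univ, mul_one]
        _ = ENNReal.ofReal (C ω') + ENNReal.ofReal (∫ b, ‖G (W ω') b‖^2 ∂μB) := by
            rw [ofReal_integral_eq_lintegral_ofReal hint
              (Filter.Eventually.of_forall fun b => by positivity)]
        _ ≤ ENNReal.ofReal (C ω') + ENNReal.ofReal (σ^2 + ‖g (W ω')‖^2) := by
            gcongr
            try exact ENNReal.ofReal_le_ofReal hval
        _ = ENNReal.ofReal (C ω' + ‖g (W ω')‖^2) + ENNReal.ofReal (σ^2) := by
            rw [← ENNReal.ofReal_add (hCnonneg ω') (by positivity),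
              ← ENNReal.ofReal_add (by positivity) (by positivity)]
            congr 1
            ring
    -- pointwise coefficient bound
    have h2γt : 2*γ^2*(t:ℝ) ≤ x := by
      have htn : (t:ℝ) ≤ (n:ℝ)+1 := by
        have : (t:ℕ) ≤ n+1 := le_of_lt ht
        exact_mod_cast this
      nlinarith [hγpos, hγE, hγsmall, sq_nonneg γ]
    have hptwise : ∀ ω : Fin (n+1) → Bt,
        (∑ s ∈ range t, q s ω) + ‖g (w t ω)‖^2
          ≤ (1 + x) * (∑ s ∈ range t, q s ω) + 2*‖g wk‖^2 := by
      intro ω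
      have hqs : 0 ≤ ∑ s ∈ range t, q s ω := Finset.sum_nonneg fun s _ => hqnonneg s ω
      have h1 := hgrad2 (w t ω)
      have h2 := hpath t (le_of_lt ht) ω
      have h3 : 2*L^2*‖w t ω - wk‖^2 ≤ 2*γ^2*(t:ℝ)*(∑ s ∈ range t, q s ω) := by
        have h4 := mul_le_mul_of_nonneg_left h2 (by positivity : (0:ℝ) ≤ 2*L^2)
        calc 2*L^2*‖w t ω - wk‖^2 ≤ 2*L^2*((t:ℝ) * η^2 * ∑ s ∈ range t, q s ω) := h4
          _ = 2*γ^2*(t:ℝ)*(∑ s ∈ range t, q s ω) := by rw [hγdef]; ring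
      have h5 : 2*γ^2*(t:ℝ)*(∑ s ∈ range t, q s ω) ≤ x*(∑ s ∈ range t, q s ω) :=
        mul_le_mul_of_nonneg_right h2γt hqs
      have hexp : (1 + x) * (∑ s ∈ range t, q s ω) + 2*‖g wk‖^2
          = (∑ s ∈ range t, q s ω) + (x*(∑ s ∈ range t, q s ω) + 2*‖g wk‖^2) := by ring
      rw [hexp]
      linarith
    -- assemble
    calc T (t+1)
        = ∫⁻ p, ENNReal.ofReal (C p.2 + ‖G (W p.2) p.1‖^2) ∂(μB.prod ν') := by
          simp only [hTdef]
          rw [htrans (fun ω => ENNReal.ofReal (∑ s ∈ range (t+1), q s ω))]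
          refine lintegral_congr fun p => ?_
          rw [show e.symm p = e.symm (p.1, p.2) from rfl, hFeq p.1 p.2]
      _ ≤ ∫⁻ ω', ∫⁻ b, ENNReal.ofReal (C ω' + ‖G (W ω') b‖^2) ∂μB ∂ν' :=
          aux_lintegral_prod_le μB ν' _
      _ ≤ ∫⁻ ω', (ENNReal.ofReal (C ω' + ‖g (W ω')‖^2) + ENNReal.ofReal (σ^2)) ∂ν' :=
          lintegral_mono fun ω' => hinner ω'
      _ = (∫⁻ ω', ENNReal.ofReal (C ω' + ‖g (W ω')‖^2) ∂ν') + ENNReal.ofReal (σ^2) := by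
          rw [lintegral_add_right' _ aemeasurable_const, lintegral_const, measure_univ, mul_one]
      _ ≤ (∫⁻ p, ENNReal.ofReal (C p.2 + ‖g (W p.2)‖^2) ∂(μB.prod ν')) + ENNReal.ofReal (σ^2) := by
          gcongr
          exact aux_lintegral_le_prod_snd μB ν' _
      _ = (∫⁻ ω, ENNReal.ofReal ((∑ s ∈ range t, q s ω) + ‖g (w t ω)‖^2) ∂ν)
            + ENNReal.ofReal (σ^2) := by
          congr 1
          rw [htrans (fun ω => ENNReal.ofReal ((∑ s ∈ range t, q s ω) + ‖g (w t ω)‖^2))]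
          refine lintegral_congr fun p => ?_
          have hc : (∑ s ∈ range t, q s (e.symm (p.1, p.2))) = C p.2 := by
            rw [hCdef]
            exact Finset.sum_congr rfl fun s hs => hqeq s (Finset.mem_range.1 hs) p.1 p.2
          have hwp : w t (e.symm (p.1, p.2)) = W p.2 := by
            rw [hWeq t le_rfl p.1 p.2, hWdef]
          rw [show e.symm p = e.symm (p.1, p.2) from rfl, hc, hwp]
      _ ≤ (∫⁻ ω, (ENNReal.ofReal (1 + x) * ENNReal.ofReal (∑ s ∈ range t, q s ω)
            + ENNReal.ofReal (2*‖g wk‖^2)) ∂ν) + ENNReal.ofReal (σ^2) := by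
          gcongr with ω
          rw [← ENNReal.ofReal_mul (by positivity)]
          rw [← ENNReal.ofReal_add (by positivity) (by positivity)]
          exact ENNReal.ofReal_le_ofReal (hptwise ω)
      _ = ENNReal.ofReal (1 + x) * T t + (ENNReal.ofReal (2*‖g wk‖^2) + ENNReal.ofReal (σ^2)) := by
          rw [lintegral_add_right' _ aemeasurable_const, lintegral_const, measure_univ, mul_one,
            lintegral_const_mul' _ _ ENNReal.ofReal_ne_top, hTdef, add_assoc]
      _ = ENNReal.ofReal (1 + x) * T t + K := by
          rw [hKdef, ← ENNReal.ofReal_add (by positivity) (by positivity)]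
  -- geometric bound on T
  have hT0 : T 0 = 0 := by
    simp only [hTdef]
    simp
  have hone_le : (0:ℝ) ≤ 1 + x := by linarith
  have hTbound : ∀ t, t ≤ n+1 → T t ≤ ENNReal.ofReal ((t:ℝ) * (1+x)^t) * K := by
    intro t
    induction t with
    | zero => intro _; rw [hT0]; exact zero_le
    | succ t ih =>
      intro ht
      have htn : t < n+1 := ht
      have hnn1 : (0:ℝ) ≤ (t:ℝ) * (1+x)^t :=
        mul_nonneg (Nat.cast_nonneg t) (pow_nonneg hone_le t)
      calc T (t+1) ≤ ENNReal.ofReal (1+x) * T t + K := hTrec t htn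
        _ ≤ ENNReal.ofReal (1+x) * (ENNReal.ofReal ((t:ℝ)*(1+x)^t) * K) + K := by
            gcongr
            exact ih (le_of_lt htn)
        _ = ENNReal.ofReal ((1+x)*((t:ℝ)*(1+x)^t) + 1) * K := by
            rw [ENNReal.ofReal_add (mul_nonneg hone_le hnn1) zero_le_one, ENNReal.ofReal_one,
              ENNReal.ofReal_mul hone_le, add_mul, one_mul, mul_assoc]
        _ ≤ ENNReal.ofReal (((t:ℝ)+1) * (1+x)^(t+1)) * K := by
            refine mul_le_mul_left (ENNReal.ofReal_le_ofReal ?_) K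
            have hone : (1:ℝ) ≤ (1+x)^(t+1) := one_le_pow₀ (by linarith)
            rw [pow_succ] at hone ⊢
            nlinarith [pow_nonneg hone_le t, hone]
        _ = ENNReal.ofReal (((t+1:ℕ):ℝ) * (1+x)^(t+1)) * K := by
            congr 2
            push_cast
            ring
  have hxcast : x = 1 / (2 * (((n+1:ℕ)):ℝ)) := by
    rw [hxdef]
    push_cast
    ring
  -- final assembly
  intro τ hτ
  have hIb : ∀ t, t < τ →
      ∫ ω, ‖g (w t ω)‖^2 ∂ν ≤ (10/3)*γ^2*(t:ℝ)^2*(2*‖g wk‖^2 + σ^2) + 2*‖g wk‖^2 := by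
    intro t htτ
    have htE : t ≤ n+1 := le_trans (le_of_lt htτ) hτ
    have hAb : (∫⁻ ω, ENNReal.ofReal (‖g (w t ω)‖^2) ∂ν)
        ≤ ENNReal.ofReal ((10/3)*γ^2*(t:ℝ)^2) * K + ENNReal.ofReal (2*‖g wk‖^2) := by
      have hpt : ∀ ω, ENNReal.ofReal (‖g (w t ω)‖^2)
          ≤ ENNReal.ofReal (2*γ^2*(t:ℝ)) * ENNReal.ofReal (∑ s ∈ range t, q s ω)
            + ENNReal.ofReal (2*‖g wk‖^2) := by
        intro ω
        rw [← ENNReal.ofReal_mul (by positivity),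
          ← ENNReal.ofReal_add (by positivity) (by positivity)]
        apply ENNReal.ofReal_le_ofReal
        have h1 := hgrad2 (w t ω)
        have h2 := hpath t htE ω
        have h3 : 2*L^2*‖w t ω - wk‖^2 ≤ 2*γ^2*(t:ℝ)*(∑ s ∈ range t, q s ω) := by
          have h4 := mul_le_mul_of_nonneg_left h2 (by positivity : (0:ℝ) ≤ 2*L^2)
          calc 2*L^2*‖w t ω - wk‖^2 ≤ 2*L^2*((t:ℝ) * η^2 * ∑ s ∈ range t, q s ω) := h4
            _ = 2*γ^2*(t:ℝ)*(∑ s ∈ range t, q s ω) := by rw [hγdef]; ring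
        linarith
      calc ∫⁻ ω, ENNReal.ofReal (‖g (w t ω)‖^2) ∂ν
          ≤ ∫⁻ ω, (ENNReal.ofReal (2*γ^2*(t:ℝ)) * ENNReal.ofReal (∑ s ∈ range t, q s ω)
            + ENNReal.ofReal (2*‖g wk‖^2)) ∂ν := lintegral_mono hpt
        _ = ENNReal.ofReal (2*γ^2*(t:ℝ)) * T t + ENNReal.ofReal (2*‖g wk‖^2) := by
            rw [lintegral_add_right' _ aemeasurable_const, lintegral_const, measure_univ, mul_one,
              lintegral_const_mul' _ _ ENNReal.ofReal_ne_top]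
        _ ≤ ENNReal.ofReal (2*γ^2*(t:ℝ)) * (ENNReal.ofReal ((t:ℝ)*(1+x)^t) * K)
              + ENNReal.ofReal (2*‖g wk‖^2) := by
            exact add_le_add_left (mul_le_mul_right (hTbound t htE) _) _
        _ = ENNReal.ofReal ((2*γ^2*(t:ℝ))*((t:ℝ)*(1+x)^t)) * K
              + ENNReal.ofReal (2*‖g wk‖^2) := by
            rw [← mul_assoc, ← ENNReal.ofReal_mul (by positivity)]
        _ ≤ ENNReal.ofReal ((10/3)*γ^2*(t:ℝ)^2) * K + ENNReal.ofReal (2*‖g wk‖^2) := by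
            refine add_le_add_left (mul_le_mul_left (ENNReal.ofReal_le_ofReal ?_) K) _
            have hp53 : (1+x)^t ≤ 5/3 := by
              rw [hxcast]
              exact aux_pow_le (n+1) hE t htE
            have hc : (0:ℝ) ≤ 2*γ^2*(t:ℝ)*(t:ℝ) := by positivity
            have h6 := mul_le_mul_of_nonneg_left hp53 hc
            nlinarith [h6]
    have hfin : ENNReal.ofReal ((10/3)*γ^2*(t:ℝ)^2) * K + ENNReal.ofReal (2*‖g wk‖^2) ≠ ⊤ := by
      rw [hKdef]
      exact ENNReal.add_ne_top.2 ⟨ENNReal.mul_ne_top ENNReal.ofReal_ne_top ENNReal.ofReal_ne_top,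
        ENNReal.ofReal_ne_top⟩
    have htoReal : (ENNReal.ofReal ((10/3)*γ^2*(t:ℝ)^2) * K + ENNReal.ofReal (2*‖g wk‖^2)).toReal
        = (10/3)*γ^2*(t:ℝ)^2*(2*‖g wk‖^2 + σ^2) + 2*‖g wk‖^2 := by
      rw [hKdef, ENNReal.toReal_add
          (ENNReal.mul_ne_top ENNReal.ofReal_ne_top ENNReal.ofReal_ne_top) ENNReal.ofReal_ne_top,
        ENNReal.toReal_mul, ENNReal.toReal_ofReal (by positivity),
        ENNReal.toReal_ofReal (by positivity), ENNReal.toReal_ofReal (by positivity)]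
    by_cases hm : AEStronglyMeasurable (fun ω => ‖g (w t ω)‖^2) ν
    · rw [integral_eq_lintegral_of_nonneg_ae
        (Filter.Eventually.of_forall fun ω => by positivity) hm, ← htoReal]
      exact ENNReal.toReal_mono hfin hAb
    · rw [integral_undef (fun hc => hm hc.aestronglyMeasurable)]
      positivity
  calc ∑ t ∈ range τ, ∫ ω, ‖g (w t ω)‖^2 ∂ν
      ≤ ∑ t ∈ range τ, ((10/3)*γ^2*(t:ℝ)^2*(2*‖g wk‖^2 + σ^2) + 2*‖g wk‖^2) :=
        Finset.sum_le_sum fun t ht => hIb t (Finset.mem_range.1 ht)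
    _ = ∑ t ∈ range τ, ((10/3)*γ^2*(2*‖g wk‖^2 + σ^2)*(t:ℝ)^2 + 2*‖g wk‖^2) :=
        Finset.sum_congr rfl fun t _ => by ring
    _ = (10/3)*γ^2*(2*‖g wk‖^2 + σ^2) * (∑ t ∈ range τ, (t:ℝ)^2) + (τ:ℝ)*(2*‖g wk‖^2) := by
        rw [Finset.sum_add_distrib, ← Finset.mul_sum, Finset.sum_const, Finset.card_range,
          nsmul_eq_mul]
    _ ≤ ((τ:ℝ)/3) * (8*‖g wk‖^2 + σ^2) := by
        have hsq := aux_sum_sq τ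
        have hτn : (τ:ℝ) ≤ (n:ℝ)+1 := by exact_mod_cast hτ
        have hγτ : γ * (τ:ℝ) ≤ 1/2 :=
          le_trans (mul_le_mul_of_nonneg_left hτn (le_of_lt hγpos)) hγE
        have hτ0 : (0:ℝ) ≤ (τ:ℝ) := Nat.cast_nonneg τ
        have hS0 : (0:ℝ) ≤ ∑ t ∈ range τ, (t:ℝ)^2 :=
          Finset.sum_nonneg fun t _ => sq_nonneg _
        have ha : (0:ℝ) ≤ ‖g wk‖^2 := sq_nonneg _
        have hss : (0:ℝ) ≤ σ^2 := sq_nonneg σ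
        have hc0 : (0:ℝ) ≤ (10/3)*γ^2*(2*‖g wk‖^2 + σ^2) := by positivity
        have h1 : (10/3)*γ^2*(2*‖g wk‖^2 + σ^2) * (∑ t ∈ range τ, (t:ℝ)^2)
            ≤ (10/9)*γ^2*(2*‖g wk‖^2 + σ^2) * (τ:ℝ)^3 := by
          nlinarith [mul_le_mul_of_nonneg_left hsq hc0]
        have hγτ2 : γ^2*(τ:ℝ)^2 ≤ 1/4 := by
          nlinarith [mul_self_le_mul_self (mul_nonneg (le_of_lt hγpos) hτ0) hγτ]
        have h2 : (10/9)*γ^2*(2*‖g wk‖^2 + σ^2) * (τ:ℝ)^3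
            ≤ (10/36)*(τ:ℝ)*(2*‖g wk‖^2 + σ^2) := by
          nlinarith [mul_le_mul_of_nonneg_right hγτ2
            (mul_nonneg hτ0 (by positivity : (0:ℝ) ≤ 2*‖g wk‖^2 + σ^2))]
        nlinarith [h1, h2, mul_nonneg hτ0 ha, mul_nonneg hτ0 hss]
end
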